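/- arXiv:1710.07002 — 6 statements merged into one kernel-verified Lean document; each statement's English description precedes it below -/
import Mathlib

section
/- For every positive integer m, the number of normalized 2m-tuples ω with |E(ω)| = m and |V(ω)| = m + 1 equals the Catalan number Catalan(m) = (1/(m+1))·binom(2m, m). -/
open DyckStep List

namespace CatAux

abbrev St := List ℕ × ℕ × (ℕ → ℕ)

def dstep : St → DyckStep → St
  | (s, c, f), U => (c :: s, c + 1, Function.update f c (s.headD 0))
  | (s, c, f), D => (s.tail, c, f)

def dstate (w : List DyckStep) : St := w.foldl dstep ([1], 2, id)

def sk (p : List DyckStep) : List ℕ := (dstate p).1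
def ck (p : List DyckStep) : ℕ := (dstate p).2.1
def fk (p : List DyckStep) : ℕ → ℕ := (dstate p).2.2

def tt (w : List DyckStep) (j : ℕ) : ℕ := (sk (w.take j)).headD 0

lemma sym2_max_eq {a b c d : ℕ} (h : s(a, b) = s(c, d)) (h1 : b < a) (h2 : d < c) :
    a = c ∧ b = d := by
  rw [Sym2.eq_iff] at h
  omega

structure Inv (p : List DyckStep) : Prop where
  hne : sk p ≠ []
  hlen : (sk p).length + p.count D = 1 + p.count U
  hc : ck p = 2 + p.count U
  hlast : (sk p).getLast? = some 1
  hchain : (sk p).Chain' (fun a b => fk p a = b ∧ b < a)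
  hmem : ∀ v ∈ sk p, 1 ≤ v ∧ v < ck p

lemma inv_nil : Inv [] := by
  refine ⟨?_, ?_, ?_, ?_, ?_, ?_⟩ <;>
    simp [sk, ck, fk, dstate, List.Chain', List.isChain_singleton]

lemma inv_U {p : List DyckStep} (h : Inv p) : Inv (p ++ [U]) ∧
    sk (p ++ [U]) = ck p :: sk p ∧ ck (p ++ [U]) = ck p + 1 ∧
    fk (p ++ [U]) = Function.update (fk p) (ck p) ((sk p).headD 0) := by
  obtain ⟨hne, hlen, hc, hlast, hchain, hmem⟩ := h
  have hd : dstate (p ++ [U]) = dstep (dstate p) U := by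
    unfold dstate; rw [List.foldl_append]; rfl
  rcases e : dstate p with ⟨s, c, f⟩
  have es : sk p = s := by rw [sk, e]
  have ec : ck p = c := by rw [ck, e]
  have ef : fk p = f := by rw [fk, e]
  rw [es] at hne hlen hlast hchain hmem ⊢
  rw [ec] at hc hmem ⊢
  rw [ef] at hchain ⊢
  rw [e] at hd
  have hs1 : sk (p ++ [U]) = c :: s := by rw [sk, hd]; rfl
  have hc1 : ck (p ++ [U]) = c + 1 := by rw [ck, hd]; rfl
  have hf1 : fk (p ++ [U]) = Function.update f c (s.headD 0) := by rw [fk, hd]; rfl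
  have hcnt : ∀ x : DyckStep, (p ++ [U]).count x = p.count x + if U = x then 1 else 0 := by
    intro x; simp [List.count_append, List.count_singleton']
  refine ⟨⟨by simp [hs1], ?_, ?_, ?_, ?_, ?_⟩, hs1, hc1, hf1⟩
  · rw [hs1, hcnt U, hcnt D]; simp; omega
  · rw [hc1, hcnt U, hc]; simp; omega
  · rw [hs1, List.getLast?_cons, hlast]
    cases s with
    | nil => simp at hne
    | cons a l => simp
  · rw [hs1, hf1]; unfold List.Chain' at hchain ⊢; rw [List.isChain_cons]
    constructor
    · intro h hh
      have hhs : h ∈ s := List.mem_of_mem_head? hh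
      have hh' : s.headD 0 = h := by
        cases s with
        | nil => simp at hh
        | cons a l => simp at hh ⊢; omega
      exact ⟨by rw [Function.update_self, hh'], (hmem h hhs).2⟩
    · rw [List.isChain_iff_getElem] at hchain ⊢
      intro i hi
      obtain ⟨h1, h2⟩ := hchain i hi
      refine ⟨?_, h2⟩
      rw [Function.update_of_ne, h1]
      exact Nat.ne_of_lt (hmem _ (List.getElem_mem _)).2
  · intro v hv
    rw [hc1]
    rcases List.mem_cons.mp (hs1 ▸ hv) with h | h
    · subst h; omega
    · have := hmem v h; omega

lemma inv_D {p : List DyckStep} (h : Inv p) (hlt : p.count D < p.count U) :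
    Inv (p ++ [D]) ∧ sk (p ++ [D]) = (sk p).tail ∧ ck (p ++ [D]) = ck p ∧
      fk (p ++ [D]) = fk p := by
  obtain ⟨hne, hlen, hc, hlast, hchain, hmem⟩ := h
  have hd : dstate (p ++ [D]) = dstep (dstate p) D := by
    unfold dstate; rw [List.foldl_append]; rfl
  rcases e : dstate p with ⟨s, c, f⟩
  have es : sk p = s := by rw [sk, e]
  have ec : ck p = c := by rw [ck, e]
  have ef : fk p = f := by rw [fk, e]
  rw [es] at hne hlen hlast hchain hmem ⊢
  rw [ec] at hc hmem ⊢
  rw [ef] at hchain ⊢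
  rw [e] at hd
  have hs1 : sk (p ++ [D]) = s.tail := by rw [sk, hd]; rfl
  have hc1 : ck (p ++ [D]) = c := by rw [ck, hd]; rfl
  have hf1 : fk (p ++ [D]) = f := by rw [fk, hd]; rfl
  have hcnt : ∀ x : DyckStep, (p ++ [D]).count x = p.count x + if D = x then 1 else 0 := by
    intro x; simp [List.count_append, List.count_singleton']
  have hlen2 : 2 ≤ s.length := by omega
  obtain ⟨a, b, l, rfl⟩ : ∃ a b l, s = a :: b :: l := by
    match s, hlen2 with
    | a :: b :: l, _ => exact ⟨a, b, l, rfl⟩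
  refine ⟨⟨?_, ?_, ?_, ?_, ?_, ?_⟩, hs1, hc1, hf1⟩
  · simp [hs1]
  · rw [hs1, hcnt U, hcnt D]; simp at hlen ⊢; omega
  · rw [hc1, hcnt U, hc]; simp
  · rw [hs1]; simpa using hlast
  · rw [hs1, hf1]; exact hchain.tail
  · intro v hv
    rw [hs1] at hv
    rw [hc1]
    exact hmem v (List.mem_of_mem_tail hv)

lemma take_succ_eq (w : List DyckStep) {j : ℕ} (h : j < w.length) :
    w.take (j+1) = w.take j ++ [w[j]] := by
  rw [List.take_succ, List.getElem?_eq_getElem h]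
  rfl

lemma dstate_take_succ (w : List DyckStep) (j : ℕ) (h : j < w.length) :
    dstate (w.take (j+1)) = dstep (dstate (w.take j)) w[j] := by
  unfold dstate
  rw [take_succ_eq w h, List.foldl_append]
  rfl

section Run
variable {w : List DyckStep} (hw : ∀ i, (w.take i).count D ≤ (w.take i).count U)

include hw

lemma inv_take : ∀ j, Inv (w.take j) := by
  intro j
  induction j with
  | zero => simpa using inv_nil
  | succ j ih =>
      rcases le_or_gt w.length j with hj | hj
      · rw [List.take_of_length_le (by omega), ← List.take_of_length_le hj]
        exact ih
      rw [take_succ_eq w hj]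
      rcases (w[j]'hj).dichotomy with hU | hD
      · rw [hU]; exact (inv_U ih).1
      · rw [hD]
        refine (inv_D ih ?_).1
        have h2 := hw (j+1)
        rw [take_succ_eq w hj, hD] at h2
        simp [List.count_append, List.count_singleton'] at h2
        omega

lemma tt_mem_stack (j : ℕ) : tt w j ∈ sk (w.take j) := by
  have h := (inv_take hw j).hne
  rw [tt]
  cases e : sk (w.take j) with
  | nil => exact absurd e h
  | cons a l => simp [e]

lemma tt_pos (j : ℕ) : 1 ≤ tt w j := ((inv_take hw j).hmem _ (tt_mem_stack hw j)).1

lemma tt_lt_ck (j : ℕ) : tt w j < ck (w.take j) := ((inv_take hw j).hmem _ (tt_mem_stack hw j)).2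

lemma step_U {j : ℕ} (hj : j < w.length) (hU : w[j] = U) :
    tt w (j+1) = ck (w.take j) ∧
    sk (w.take (j+1)) = ck (w.take j) :: sk (w.take j) ∧
    ck (w.take (j+1)) = ck (w.take j) + 1 ∧
    fk (w.take (j+1)) = Function.update (fk (w.take j)) (ck (w.take j)) (tt w j) := by
  have h := inv_U (inv_take hw j)
  rw [← hU, ← take_succ_eq w hj] at h
  exact ⟨by rw [tt, h.2.1]; rfl, h.2.1, h.2.2.1, h.2.2.2⟩

lemma step_D {j : ℕ} (hj : j < w.length) (hD : w[j] = D) :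
    sk (w.take (j+1)) = (sk (w.take j)).tail ∧
    ck (w.take (j+1)) = ck (w.take j) ∧
    fk (w.take (j+1)) = fk (w.take j) ∧
    tt w (j+1) = fk (w.take j) (tt w j) ∧
    tt w (j+1) < tt w j ∧ tt w (j+1) ∈ sk (w.take j) := by
  have inv := inv_take hw j
  have hcc : (w.take j).count D < (w.take j).count U := by
    have h2 := hw (j+1)
    rw [take_succ_eq w hj, hD] at h2
    simp [List.count_append, List.count_singleton'] at h2
    omega
  have h := inv_D inv hcc
  rw [← hD, ← take_succ_eq w hj] at h
  have hlen2 : 2 ≤ (sk (w.take j)).length := by have := inv.hlen; omega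
  obtain ⟨a, b, l, e⟩ : ∃ a b l, sk (w.take j) = a :: b :: l := by
    match (sk (w.take j)), hlen2 with
    | a :: b :: l, _ => exact ⟨a, b, l, rfl⟩
  have hchain := inv.hchain
  rw [e] at hchain; unfold List.Chain' at hchain; rw [List.isChain_cons_cons] at hchain
  have hta : tt w j = a := by rw [tt, e]; rfl
  have htb : tt w (j+1) = b := by rw [tt, h.2.1, e]; rfl
  refine ⟨h.2.1, h.2.2.1, h.2.2.2, ?_, ?_, ?_⟩
  · rw [htb, hta, hchain.1.1]
  · rw [htb, hta]; exact hchain.1.2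
  · rw [htb, e]; simp

lemma ck_mono : ∀ {j j' : ℕ}, j ≤ j' → ck (w.take j) ≤ ck (w.take j') := by
  intro j j' h
  induction j' with
  | zero => simp_all
  | succ j' ih =>
      rcases Nat.lt_or_ge j (j'+1) with h' | h'
      · have hle := ih (by omega)
        rcases le_or_gt w.length j' with hj | hj
        · have e : w.take (j'+1) = w.take j' := by
            rw [List.take_of_length_le (by omega), List.take_of_length_le hj]
          rw [e]; exact hle
        rcases (w[j']'hj).dichotomy with hU | hD
        · have := (step_U hw hj hU).2.2.1; omega
        · have := (step_D hw hj hD).2.1; omega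
      · have : j = j' + 1 := by omega
        rw [this]

lemma fk_stable : ∀ {j j' : ℕ}, j ≤ j' → ∀ v < ck (w.take j),
    fk (w.take j') v = fk (w.take j) v := by
  intro j j' h v hv
  induction j' with
  | zero => have : j = 0 := by omega
            rw [this]
  | succ j' ih =>
      rcases Nat.lt_or_ge j (j'+1) with h' | h'
      · have hle := ih (by omega)
        rcases le_or_gt w.length j' with hj | hj
        · have e : w.take (j'+1) = w.take j' := by
            rw [List.take_of_length_le (by omega), List.take_of_length_le hj]
          rw [e]; exact hle
        rcases (w[j']'hj).dichotomy with hU | hD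
        · rw [(step_U hw hj hU).2.2.2, Function.update_of_ne, hle]
          have := ck_mono hw (show j ≤ j' by omega)
          omega
        · rw [(step_D hw hj hD).2.2.1, hle]
      · have : j = j' + 1 := by omega
        rw [this]

omit hw in
lemma tt_zero : tt w 0 = 1 := rfl

lemma ck_two_le (j : ℕ) : 2 ≤ ck (w.take j) := by
  have := (inv_take hw j).hc; omega

lemma history : ∀ j, j ≤ w.length →
    (∀ i ≤ j, 1 < tt w i → ∃ i' < i, tt w i' = tt w i - 1) ∧
    (∀ v, 1 ≤ v → v < ck (w.take j) → ∃ i ≤ j, tt w i = v) ∧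
    (∀ v ∈ sk (w.take j), ∃ i ≤ j, tt w i = v) ∧
    (∀ i < j, ∃ v, 2 ≤ v ∧ v < ck (w.take j) ∧ fk (w.take j) v < v ∧
      s(tt w i, tt w (i+1)) = s(v, fk (w.take j) v)) ∧
    (∀ v, 2 ≤ v → v < ck (w.take j) → fk (w.take j) v < v ∧
      ∃ i < j, s(tt w i, tt w (i+1)) = s(v, fk (w.take j) v)) := by
  intro j
  induction j with
  | zero =>
      intro _
      have hsk : sk (w.take 0) = [1] := rfl
      have hck : ck (w.take 0) = 2 := rfl
      have h0 : tt w 0 = 1 := rfl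
      refine ⟨?_, ?_, ?_, fun i hi => absurd hi (Nat.not_lt_zero i),
        fun v hv1 hv2 => absurd hv2 (by rw [hck]; omega)⟩
      · intro i hi h1
        interval_cases i
        omega
      · intro v h1 h2
        rw [hck] at h2
        exact ⟨0, le_refl 0, by omega⟩
      · intro v hv
        rw [hsk] at hv
        simp at hv
        exact ⟨0, le_refl 0, by omega⟩
  | succ j ih =>
      intro hj1
      have hj : j < w.length := hj1
      obtain ⟨h1, h2, h3, h4, h5⟩ := ih (by omega)
      rcases (w[j]'hj).dichotomy with hU | hD
      · obtain ⟨e1, e2, e3, e4⟩ := step_U hw hj hU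
        have hck2 : 2 ≤ ck (w.take j) := ck_two_le hw j
        have httc : tt w j < ck (w.take j) := tt_lt_ck hw j
        refine ⟨?_, ?_, ?_, ?_, ?_⟩
        · intro i hi hgt
          rcases Nat.lt_or_ge i (j+1) with h | h
          · exact h1 i (by omega) hgt
          · have : i = j + 1 := by omega
            subst this
            rw [e1] at hgt ⊢
            obtain ⟨i0, hi0, hti0⟩ := h2 (ck (w.take j) - 1) (by omega) (by omega)
            exact ⟨i0, by omega, by rw [hti0]⟩
        · intro v hv1 hv2
          rw [e3] at hv2
          rcases Nat.lt_or_ge v (ck (w.take j)) with h | h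
          · obtain ⟨i, hi, ht⟩ := h2 v hv1 h
            exact ⟨i, by omega, ht⟩
          · have : v = ck (w.take j) := by omega
            exact ⟨j+1, le_refl _, by rw [e1, this]⟩
        · intro v hv
          rw [e2] at hv
          rcases List.mem_cons.mp hv with h | h
          · exact ⟨j+1, le_refl _, by rw [e1, h]⟩
          · obtain ⟨i, hi, ht⟩ := h3 v h
            exact ⟨i, by omega, ht⟩
        · intro i hi
          rcases Nat.lt_or_ge i j with h | h
          · obtain ⟨v, hv1, hv2, hv3, hv4⟩ := h4 i h
            refine ⟨v, hv1, by omega, ?_, ?_⟩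
            · rw [e4, Function.update_of_ne (by omega)]
              exact hv3
            · rw [e4, Function.update_of_ne (by omega)]
              exact hv4
          · have hij : i = j := by omega
            refine ⟨ck (w.take j), hck2, by omega, ?_, ?_⟩
            · rw [e4, Function.update_self]
              exact httc
            · rw [hij, e4, Function.update_self, e1]
              exact Sym2.eq_swap
        · intro v hv1 hv2
          rw [e3] at hv2
          rcases Nat.lt_or_ge v (ck (w.take j)) with h | h
          · obtain ⟨hlt, i, hi, ht⟩ := h5 v hv1 h
            refine ⟨by rw [e4, Function.update_of_ne (by omega)]; exact hlt, i, by omega, ?_⟩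
            rw [e4, Function.update_of_ne (by omega)]
            exact ht
          · have hv : v = ck (w.take j) := by omega
            refine ⟨by rw [hv, e4, Function.update_self]; exact httc, j, by omega, ?_⟩
            rw [hv, e4, Function.update_self, e1]
            exact Sym2.eq_swap
      · obtain ⟨e1, e2, e3, e4, e5, e6⟩ := step_D hw hj hD
        refine ⟨?_, ?_, ?_, ?_, ?_⟩
        · intro i hi hgt
          rcases Nat.lt_or_ge i (j+1) with h | h
          · exact h1 i (by omega) hgt
          · have : i = j + 1 := by omega
            subst this
            obtain ⟨i0, hi0, hti0⟩ := h3 _ e6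
            obtain ⟨i', hi', ht'⟩ := h1 i0 hi0 (by omega)
            exact ⟨i', by omega, by rw [ht', hti0]⟩
        · intro v hv1 hv2
          rw [e2] at hv2
          obtain ⟨i, hi, ht⟩ := h2 v hv1 hv2
          exact ⟨i, by omega, ht⟩
        · intro v hv
          rw [e1] at hv
          obtain ⟨i, hi, ht⟩ := h3 v (List.mem_of_mem_tail hv)
          exact ⟨i, by omega, ht⟩
        · intro i hi
          rcases Nat.lt_or_ge i j with h | h
          · obtain ⟨v, hv1, hv2, hv3, hv4⟩ := h4 i h
            exact ⟨v, hv1, by rw [e2]; omega, by rw [e3]; exact hv3, by rw [e3]; exact hv4⟩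
          · have hij : i = j := by omega
            have h2le : 2 ≤ tt w j := by
              have := tt_pos hw (j+1); omega
            refine ⟨tt w j, h2le, by rw [e2]; exact tt_lt_ck hw j, ?_, ?_⟩
            · rw [e3, ← e4]; exact e5
            · rw [hij, e3, ← e4]
        · intro v hv1 hv2
          rw [e2] at hv2
          obtain ⟨hlt, i, hi, ht⟩ := h5 v hv1 hv2
          exact ⟨by rw [e3]; exact hlt, i, by omega, by rw [e3]; exact ht⟩

end Run

lemma count_UD (w : List DyckStep) : w.count U + w.count D = w.length := by
  induction w with
  | nil => simp
  | cons a l ih =>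
      cases a <;> simp [List.count_cons] <;> omega

section Fwd
variable {w : List DyckStep} {m : ℕ}
  (hw : ∀ i, (w.take i).count D ≤ (w.take i).count U)
  (hceq : w.count U = w.count D) (hlen : w.length = 2 * m)

include hw hceq hlen

lemma cU_eq : w.count U = m := by have := count_UD w; omega

lemma take_full : w.take (2*m) = w := by rw [← hlen]; exact List.take_length

lemma ck_full : ck w = m + 2 := by
  have h := (inv_take hw w.length).hc
  rw [List.take_length] at h
  have := cU_eq hw hceq hlen
  omega

lemma sk_full : sk w = [1] := by
  have h := inv_take hw w.length
  rw [List.take_length] at h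
  have hcu := cU_eq hw hceq hlen
  have hl1 : (sk w).length = 1 := by have := h.hlen; omega
  obtain ⟨a, e⟩ : ∃ a, sk w = [a] := by
    match (sk w), hl1 with
    | [a], _ => exact ⟨a, rfl⟩
  have := h.hlast
  rw [e] at this ⊢
  simp at this
  rw [this]

lemma tt_final : tt w (2*m) = 1 := by
  rw [tt, take_full hw hceq hlen, sk_full hw hceq hlen]
  rfl

lemma tt_adj : ∀ i < 2*m, tt w i ≠ tt w (i+1) := by
  intro i hi
  have hi' : i < w.length := by omega
  rcases (w[i]'hi').dichotomy with hU | hD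
  · have := (step_U hw hi' hU).1
    have := tt_lt_ck hw i
    omega
  · have := (step_D hw hi' hD).2.2.2.2.1
    omega

lemma tt_norm : ∀ i ≤ 2*m, 1 < tt w i → ∃ i' < i, tt w i' = tt w i - 1 := by
  have h := (history hw (2*m) (by omega)).1
  exact h

lemma tt_vimage : Finset.image (tt w) (Finset.range (2*m+1)) = Finset.Icc 1 (m+1) := by
  have hist := history hw (2*m) (by omega)
  have hckf : ck (w.take (2*m)) = m + 2 := by
    rw [take_full hw hceq hlen]; exact ck_full hw hceq hlen
  apply Finset.Subset.antisymm
  · intro v hv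
    simp only [Finset.mem_image, Finset.mem_range] at hv
    obtain ⟨i, hi, rfl⟩ := hv
    have h1 := tt_pos hw i
    have h2 := tt_lt_ck hw i
    have h3 : ck (w.take i) ≤ ck (w.take (2*m)) := ck_mono hw (by omega)
    simp only [Finset.mem_Icc]
    omega
  · intro v hv
    simp only [Finset.mem_Icc] at hv
    obtain ⟨i, hi, ht⟩ := hist.2.1 v (by omega) (by omega)
    simp only [Finset.mem_image, Finset.mem_range]
    exact ⟨i, by omega, ht⟩

lemma tt_eimage :
    Finset.image (fun i => s(tt w i, tt w (i+1))) (Finset.range (2*m)) =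
      Finset.image (fun v => s(v, fk w v)) (Finset.Icc 2 (m+1)) := by
  have hist := history hw (2*m) (by omega)
  have htf := take_full hw hceq hlen
  have hckf : ck (w.take (2*m)) = m + 2 := by rw [htf]; exact ck_full hw hceq hlen
  apply Finset.Subset.antisymm
  · intro e he
    simp only [Finset.mem_image, Finset.mem_range] at he ⊢
    obtain ⟨i, hi, rfl⟩ := he
    obtain ⟨v, hv1, hv2, hv3, hv4⟩ := hist.2.2.2.1 i hi
    rw [htf] at hv4
    exact ⟨v, Finset.mem_Icc.mpr (by omega), hv4.symm⟩
  · intro e he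
    simp only [Finset.mem_image, Finset.mem_Icc, Finset.mem_range] at he ⊢
    obtain ⟨v, hv, rfl⟩ := he
    obtain ⟨hlt, i, hi, ht⟩ := hist.2.2.2.2 v (by omega) (by omega)
    rw [htf] at ht
    exact ⟨i, hi, ht⟩

lemma fk_lt_self : ∀ v, 2 ≤ v → v ≤ m + 1 → fk w v < v := by
  intro v h1 h2
  have hist := history hw (2*m) (by omega)
  have htf := take_full hw hceq hlen
  have hckf : ck (w.take (2*m)) = m + 2 := by rw [htf]; exact ck_full hw hceq hlen
  have := (hist.2.2.2.2 v h1 (by omega)).1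
  rwa [htf] at this

lemma tt_ecard :
    (Finset.image (fun i => s(tt w i, tt w (i+1))) (Finset.range (2*m))).card = m := by
  rw [tt_eimage hw hceq hlen]
  rw [Finset.card_image_of_injOn]
  · simp
  · intro a ha b hb hab
    simp only [Finset.coe_Icc, Set.mem_Icc] at ha hb
    have h1 := fk_lt_self hw hceq hlen a ha.1 ha.2
    have h2 := fk_lt_self hw hceq hlen b hb.1 hb.2
    exact (sym2_max_eq hab h1 h2).1

end Fwd

lemma tt_injective {w w' : List DyckStep} {m : ℕ} (hm : 0 < m)
    (hw : ∀ i, (w.take i).count D ≤ (w.take i).count U)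
    (hw' : ∀ i, (w'.take i).count D ≤ (w'.take i).count U)
    (hceq : w.count U = w.count D) (hceq' : w'.count U = w'.count D)
    (hlen : w.length = 2 * m) (hlen' : w'.length = 2 * m)
    (hne : w ≠ w') : ∃ j < 2 * m, tt w j ≠ tt w' j := by
  have hPex : ∃ j, w.take j ≠ w'.take j := by
    refine ⟨2 * m, ?_⟩
    have h1 : w.take (2*m) = w := by rw [← hlen]; exact List.take_length
    have h2 : w'.take (2*m) = w' := by rw [← hlen']; exact List.take_length
    rw [h1, h2]
    exact hne
  classical
  set j0 := Nat.find hPex with hj0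
  have hj0p : w.take j0 ≠ w'.take j0 := Nat.find_spec hPex
  have hj0pos : 0 < j0 := by
    rcases Nat.eq_zero_or_pos j0 with h | h
    · rw [h] at hj0p; simp at hj0p
    · exact h
  set j := j0 - 1 with hjdef
  have hjeq : j0 = j + 1 := by omega
  have hprev : w.take j = w'.take j := by
    by_contra hcon
    have h9 : Nat.find hPex ≤ j := Nat.find_le hcon
    omega
  have hjlt : j < 2 * m := by
    by_contra hcon
    push_neg at hcon
    have h1 : w.take j = w := by apply List.take_of_length_le; omega
    have h2 : w'.take j = w' := by apply List.take_of_length_le; omega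
    rw [h1, h2] at hprev
    exact hne hprev
  have hjw : j < w.length := by omega
  have hjw' : j < w'.length := by omega
  have hlet : w[j]'hjw ≠ w'[j]'hjw' := by
    intro hcon
    apply hj0p
    rw [hjeq, take_succ_eq w hjw, take_succ_eq w' hjw', hprev, hcon]
  -- the differing position can't be the last letter
  have hjlt1 : j < 2 * m - 1 := by
    by_contra hcon
    have hj1 : j = 2 * m - 1 := by omega
    have hcU : (w.take j).count U = (w'.take j).count U := by rw [hprev]
    have hcD : (w.take j).count D = (w'.take j).count D := by rw [hprev]
    have e1 : w = w.take j ++ [w[j]'hjw] := by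
      rw [← take_succ_eq w hjw]
      rw [show j + 1 = 2*m by omega, ← hlen, List.take_length]
    have e2 : w' = w'.take j ++ [w'[j]'hjw'] := by
      rw [← take_succ_eq w' hjw']
      rw [show j + 1 = 2*m by omega, ← hlen', List.take_length]
    have hc1 := count_UD w
    have hc2 := count_UD w'
    rcases (w[j]'hjw).dichotomy with hU | hD <;>
      rcases (w'[j]'hjw').dichotomy with hU' | hD'
    · exact hlet (by rw [hU, hU'])
    · rw [e1] at hceq hc1
      rw [e2] at hceq' hc2
      rw [hU] at hceq hc1
      rw [hD'] at hceq' hc2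
      simp [List.count_append, List.count_singleton'] at hceq hceq' hc1 hc2
      omega
    · rw [e1] at hceq hc1
      rw [e2] at hceq' hc2
      rw [hD] at hceq hc1
      rw [hU'] at hceq' hc2
      simp [List.count_append, List.count_singleton'] at hceq hceq' hc1 hc2
      omega
    · exact hlet (by rw [hD, hD'])
  -- states at j agree
  have hstate : dstate (w.take j) = dstate (w'.take j) := by rw [hprev]
  refine ⟨j + 1, by omega, ?_⟩
  have hckeq : ck (w.take j) = ck (w'.take j) := by unfold ck; rw [hstate]
  rcases (w[j]'hjw).dichotomy with hU | hD <;>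
    rcases (w'[j]'hjw').dichotomy with hU' | hD'
  · exact absurd (hU.trans hU'.symm) hlet
  · have h1 := (step_U hw hjw hU).1
    have h2 := (step_D hw' hjw' hD').2.2.2.2.2
    have h3 := (inv_take hw' j).hmem _ h2
    omega
  · have h1 := (step_U hw' hjw' hU').1
    have h2 := (step_D hw hjw hD).2.2.2.2.2
    have h3 := (inv_take hw j).hmem _ h2
    omega
  · exact absurd (hD.trans hD'.symm) hlet

lemma vimage_eq_Icc {m : ℕ} (x : ℕ → ℕ) (hx0 : x 0 = 1) (hxn : x (2*m) = 1)
    (hpos : ∀ j, 1 ≤ x j)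
    (hnorm : ∀ j < 2*m, 1 < x j → ∃ j' < j, x j' = x j - 1)
    (hcard : (Finset.image x (Finset.range (2*m+1))).card = m + 1) :
    Finset.image x (Finset.range (2*m+1)) = Finset.Icc 1 (m+1) := by
  set Vx := Finset.image x (Finset.range (2*m+1)) with hVx
  have hmemx : ∀ i ≤ 2*m, x i ∈ Vx := by
    intro i hi
    rw [hVx]
    exact Finset.mem_image.mpr ⟨i, Finset.mem_range.mpr (by omega), rfl⟩
  have hC : ∀ k v, v ∈ Vx → 1 ≤ v - k → v - k ∈ Vx := by
    intro k
    induction k with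
    | zero => intro v hv _; simpa using hv
    | succ k ih =>
        intro v hv h1
        have h2 : v - k ∈ Vx := ih v hv (by omega)
        have h3 : 2 ≤ v - k := by omega
        obtain ⟨i, hi, hxi⟩ := Finset.mem_image.mp h2
        rw [Finset.mem_range] at hi
        have hi2 : i < 2*m := by
          rcases Nat.lt_or_ge i (2*m) with h | h
          · exact h
          · exfalso; have : i = 2*m := by omega
            rw [this, hxn] at hxi; omega
        obtain ⟨j', hj', hxj'⟩ := hnorm i hi2 (by omega)
        have : x j' = v - (k+1) := by omega
        rw [← this]
        exact hmemx j' (by omega)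
  have hne : Vx.Nonempty := ⟨x 0, hmemx 0 (by omega)⟩
  set M := Vx.max' hne with hM
  have hMmem : M ∈ Vx := Vx.max'_mem hne
  have hsub1 : Vx ⊆ Finset.Icc 1 M := by
    intro v hv
    rw [Finset.mem_Icc]
    obtain ⟨i, _, hxi⟩ := Finset.mem_image.mp hv
    exact ⟨hxi ▸ hpos i, Vx.le_max' v hv⟩
  have hsub2 : Finset.Icc 1 M ⊆ Vx := by
    intro u hu
    rw [Finset.mem_Icc] at hu
    have := hC (M - u) M hMmem (by omega)
    have he : M - (M - u) = u := by
      have : u ≤ M := hu.2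
      omega
    rwa [he] at this
  have hVeq : Vx = Finset.Icc 1 M := Finset.Subset.antisymm hsub1 hsub2
  have : M = m + 1 := by
    rw [hVeq] at hcard
    simp [Nat.card_Icc] at hcard
    omega
  rw [hVeq, this]


lemma reconstruction {m : ℕ} (hm : 0 < m) (x : ℕ → ℕ)
    (hx0 : x 0 = 1) (hxn : x (2*m) = 1) (hpos : ∀ j, 1 ≤ x j)
    (hadj : ∀ j < 2*m, x j ≠ x (j+1))
    (hnorm : ∀ j < 2*m, 1 < x j → ∃ j' < j, x j' = x j - 1)
    (hV : Finset.image x (Finset.range (2*m+1)) = Finset.Icc 1 (m+1))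
    (hE : (Finset.image (fun j => s(x j, x (j+1))) (Finset.range (2*m))).card = m) :
    ∃ w : List DyckStep, w.length = 2*m ∧ w.count U = w.count D ∧
      (∀ i, (w.take i).count D ≤ (w.take i).count U) ∧ (∀ j ≤ 2*m, tt w j = x j) := by
  classical
  have hxle : ∀ i ≤ 2*m, x i ≤ m + 1 := by
    intro i hi
    have : x i ∈ Finset.Icc 1 (m+1) := by
      rw [← hV]
      exact Finset.mem_image.mpr ⟨i, Finset.mem_range.mpr (by omega), rfl⟩
    exact (Finset.mem_Icc.mp this).2
  have hocc : ∀ v, 1 ≤ v → v ≤ m + 1 → ∃ i, x i = v := by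
    intro v h1 h2
    have : v ∈ Finset.image x (Finset.range (2*m+1)) := by
      rw [hV]; exact Finset.mem_Icc.mpr ⟨h1, h2⟩
    obtain ⟨i, _, hi⟩ := Finset.mem_image.mp this
    exact ⟨i, hi⟩
  set fi : ℕ → ℕ := fun v => sInf {i | x i = v} with hfidef
  set fp : ℕ → ℕ := fun v => x (fi v - 1) with hfpdef
  have hfi_spec : ∀ v, 1 ≤ v → v ≤ m+1 → x (fi v) = v := fun v h1 h2 =>
    Nat.sInf_mem (hocc v h1 h2)
  have hfi_min : ∀ v i, i < fi v → x i ≠ v := by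
    intro v i hi hxi
    exact Nat.notMem_of_lt_sInf (show i < sInf {i | x i = v} from hi) hxi
  have hfi_le : ∀ i, fi (x i) ≤ i := fun i => Nat.sInf_le rfl
  have hfi_pos : ∀ v, 2 ≤ v → v ≤ m+1 → 1 ≤ fi v := by
    intro v h2 hle
    rcases Nat.eq_zero_or_pos (fi v) with h' | h'
    · have := hfi_spec v (by omega) hle
      rw [h', hx0] at this; omega
    · exact h'
  have hfi_ltn : ∀ v, 2 ≤ v → v ≤ m+1 → fi v < 2*m := by
    intro v h2 hle
    obtain ⟨i, hi1, hi2⟩ := Finset.mem_image.mp (by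
      rw [hV]; exact Finset.mem_Icc.mpr ⟨by omega, hle⟩ :
      v ∈ Finset.image x (Finset.range (2*m+1)))
    rw [Finset.mem_range] at hi1
    have hfile : fi v ≤ i := hi2 ▸ hfi_le i
    have : fi v ≠ 2*m := by
      intro hcon
      have := hfi_spec v (by omega) hle
      rw [hcon, hxn] at this; omega
    omega
  -- fp basics
  have hfp_fi : ∀ v, 2 ≤ v → v ≤ m+1 → fi (fp v) < fi v := by
    intro v h2 hle
    have h1 := hfi_pos v h2 hle
    have := hfi_le (fi v - 1)
    rw [hfpdef]
    simp only
    omega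
  have hfp_ne : ∀ v, 2 ≤ v → v ≤ m+1 → fp v ≠ v := by
    intro v h2 hle
    have h1 := hfi_pos v h2 hle
    have hlt := hfi_ltn v h2 hle
    have := hadj (fi v - 1) (by omega)
    rw [hfpdef]
    simp only
    rw [show fi v - 1 + 1 = fi v by omega] at this
    rw [hfi_spec v (by omega) hle] at this
    exact this
  have hfp_pos : ∀ v, 1 ≤ fp v := fun v => hpos _
  have hfp_le : ∀ v, 2 ≤ v → v ≤ m+1 → fp v ≤ m+1 := by
    intro v h2 hle
    have := hfi_ltn v h2 hle
    exact hxle (fi v - 1) (by omega)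
  -- the edge injection
  have hinj : Set.InjOn (fun v => s(v, fp v)) (Finset.Icc 2 (m+1) : Finset ℕ) := by
    intro a ha b hb hab
    simp only [Finset.coe_Icc, Set.mem_Icc] at ha hb
    by_contra hne
    rw [Sym2.eq_iff] at hab
    rcases hab with ⟨h1, h2⟩ | ⟨h1, h2⟩
    · exact hne h1
    · -- a = fp b and fp a = b
      have e1 : fi a < fi b := by
        rw [h1]; exact hfp_fi b hb.1 hb.2
      have e2 : fi b < fi a := by
        rw [← h2]; exact hfp_fi a ha.1 ha.2
      omega
  have himgsub : Finset.image (fun v => s(v, fp v)) (Finset.Icc 2 (m+1)) ⊆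
      Finset.image (fun j => s(x j, x (j+1))) (Finset.range (2*m)) := by
    intro e he
    obtain ⟨v, hv, rfl⟩ := Finset.mem_image.mp he
    rw [Finset.mem_Icc] at hv
    refine Finset.mem_image.mpr ⟨fi v - 1, Finset.mem_range.mpr ?_, ?_⟩
    · have := hfi_ltn v hv.1 hv.2; omega
    · have h1 := hfi_pos v hv.1 hv.2
      rw [show fi v - 1 + 1 = fi v by omega, hfi_spec v (by omega) hv.2]
      rw [hfpdef]
      exact Sym2.eq_swap
  have himg : Finset.image (fun v => s(v, fp v)) (Finset.Icc 2 (m+1)) =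
      Finset.image (fun j => s(x j, x (j+1))) (Finset.range (2*m)) := by
    apply Finset.eq_of_subset_of_card_le himgsub
    rw [hE, Finset.card_image_of_injOn hinj]
    simp
  -- classification of steps
  have hclass : ∀ j < 2*m, (2 ≤ x j ∧ x (j+1) = fp (x j)) ∨
      (2 ≤ x (j+1) ∧ x j = fp (x (j+1))) := by
    intro j hj
    have : s(x j, x (j+1)) ∈ Finset.image (fun v => s(v, fp v)) (Finset.Icc 2 (m+1)) := by
      rw [himg]
      exact Finset.mem_image.mpr ⟨j, Finset.mem_range.mpr hj, rfl⟩
    obtain ⟨v, hv, he⟩ := Finset.mem_image.mp this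
    rw [Finset.mem_Icc] at hv
    rw [Sym2.eq_iff] at he
    rcases he with ⟨h1, h2⟩ | ⟨h1, h2⟩
    · left
      refine ⟨h1 ▸ hv.1, ?_⟩
      rw [← h1]
      exact h2.symm
    · right
      refine ⟨h1 ▸ hv.1, ?_⟩
      rw [← h1]
      exact h2.symm
  have hUp_fi : ∀ j < 2*m, 2 ≤ x j → x (j+1) = fp (x j) → fi (x (j+1)) ≤ j := by
    intro j hj h2 he
    have hxj : x j ≤ m + 1 := hxle j (by omega)
    have := hfp_fi (x j) h2 hxj
    have := hfi_le j
    rw [he]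
    omega
  have hexcl : ∀ j < 2*m, ¬((2 ≤ x j ∧ x (j+1) = fp (x j)) ∧
      (2 ≤ x (j+1) ∧ x j = fp (x (j+1)))) := by
    intro j hj ⟨⟨h1, h2⟩, ⟨h3, h4⟩⟩
    have e1 : fi (x (j+1)) < fi (x j) := by
      rw [h2]; exact hfp_fi (x j) h1 (hxle j (by omega))
    have e2 : fi (x j) < fi (x (j+1)) := by
      rw [h4]; exact hfp_fi (x (j+1)) h3 (hxle (j+1) (by omega))
    omega
  set Down : ℕ → Prop := fun j => 2 ≤ x (j+1) ∧ x j = fp (x (j+1)) with hDown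
  set Up : ℕ → Prop := fun j => 2 ≤ x j ∧ x (j+1) = fp (x j) with hUp
  -- every child has an up-step
  have hup_exists : ∀ K i, 2*m - i ≤ K → i ≤ 2*m → 2 ≤ x i →
      ∃ j, i ≤ j ∧ j < 2*m ∧ x j = x i ∧ Up j := by
    intro K
    induction K with
    | zero =>
        intro i hK hi h2
        have : i = 2*m := by omega
        rw [this, hxn] at h2; omega
    | succ K ih =>
        intro i hK hi h2
        have hilt : i < 2*m := by
          rcases Nat.lt_or_ge i (2*m) with h | h
          · exact h
          · exfalso; have : i = 2*m := by omega
            rw [this, hxn] at h2; omega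
        rcases hclass i hilt with hup | hdown
        · exact ⟨i, le_refl i, hilt, rfl, hup⟩
        · obtain ⟨hd1, hd2⟩ := hdown
          obtain ⟨j', hj'1, hj'2, hj'3, hj'4⟩ := ih (i+1) (by omega) (by omega) hd1
          have hxj'1 : x (j'+1) = x i := by
            rw [hj'4.2, hj'3, ← hd2]
          have h2' : 2 ≤ x (j'+1) := by rw [hxj'1]; exact h2
          obtain ⟨j, hj1, hj2, hj3, hj4⟩ := ih (j'+1) (by omega) (by omega) h2'
          exact ⟨j, by omega, hj2, by rw [hj3, hxj'1], hj4⟩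
  -- counting
  set Dfin := (Finset.range (2*m)).filter Down with hDfin
  set Ufin := (Finset.range (2*m)).filter Up with hUfin
  have hsplit : Ufin.card + Dfin.card = 2*m := by
    have h1 : Ufin = (Finset.range (2*m)).filter (fun j => ¬ Down j) := by
      apply Finset.filter_congr
      intro j hj
      rw [Finset.mem_range] at hj
      constructor
      · intro hu hd
        exact hexcl j hj ⟨hu, hd⟩
      · intro hd
        rcases hclass j hj with h | h
        · exact h
        · exact absurd h hd
    have h2 := Finset.card_filter_add_card_filter_not (s := Finset.range (2*m))
      (p := Down)
    rw [Finset.card_range] at h2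
    rw [h1, hDfin]
    omega
  have hcardIcc : (Finset.Icc 2 (m+1)).card = m := by
    rw [Nat.card_Icc]; omega
  have hmapsD : ∀ v ∈ Finset.Icc 2 (m+1), fi v - 1 ∈ Dfin := by
    intro v hv
    rw [Finset.mem_Icc] at hv
    rw [hDfin, Finset.mem_filter, Finset.mem_range]
    have hp := hfi_pos v hv.1 hv.2
    have hl := hfi_ltn v hv.1 hv.2
    have he : fi v - 1 + 1 = fi v := by omega
    refine ⟨by omega, ?_⟩
    show 2 ≤ x (fi v - 1 + 1) ∧ x (fi v - 1) = fp (x (fi v - 1 + 1))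
    rw [he, hfi_spec v (by omega) hv.2]
    exact ⟨hv.1, rfl⟩
  have hinjD : Set.InjOn (fun v => fi v - 1) (Finset.Icc 2 (m+1) : Finset ℕ) := by
    intro a ha b hb hab
    simp only [Finset.coe_Icc, Set.mem_Icc] at ha hb
    have h1 := hfi_pos a ha.1 ha.2
    have h2 := hfi_pos b hb.1 hb.2
    simp only at hab
    have : fi a = fi b := by omega
    rw [← hfi_spec a (by omega) ha.2, ← hfi_spec b (by omega) hb.2, this]
  have hDlow : m ≤ Dfin.card := by
    rw [← hcardIcc]
    exact Finset.card_le_card_of_injOn (fun v => fi v - 1) hmapsD hinjD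
  have hUlow : m ≤ Ufin.card := by
    have hju : ∀ v, 2 ≤ v → v ≤ m+1 → ∃ j, j < 2*m ∧ x j = v ∧ Up j := by
      intro v h2 hle
      have hfi1 := hfi_ltn v h2 hle
      obtain ⟨j, _, hj2, hj3, hj4⟩ := hup_exists (2*m) (fi v) (by omega) (by omega)
        (by rw [hfi_spec v (by omega) hle]; omega)
      exact ⟨j, hj2, by rw [hj3, hfi_spec v (by omega) hle], hj4⟩
    set ju : ℕ → ℕ := fun v => sInf {j | j < 2*m ∧ x j = v ∧ Up j} with hjud
    have hjuspec : ∀ v, 2 ≤ v → v ≤ m+1 → ju v < 2*m ∧ x (ju v) = v ∧ Up (ju v) := by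
      intro v h2 hle
      exact Nat.sInf_mem (hju v h2 hle)
    rw [← hcardIcc]
    apply Finset.card_le_card_of_injOn ju
    · intro v hv
      rw [Finset.mem_coe, Finset.mem_Icc] at hv
      obtain ⟨hs1, hs2, hs3⟩ := hjuspec v hv.1 hv.2
      rw [hUfin, Finset.mem_coe, Finset.mem_filter, Finset.mem_range]
      exact ⟨hs1, hs3⟩
    · intro a ha b hb hab
      simp only [Finset.coe_Icc, Set.mem_Icc] at ha hb
      have hsa := (hjuspec a ha.1 ha.2).2.1
      have hsb := (hjuspec b hb.1 hb.2).2.1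
      rw [← hsa, ← hsb, hab]
  have hDcard : Dfin.card = m := by omega
  have hDimg : Finset.image (fun v => fi v - 1) (Finset.Icc 2 (m+1)) = Dfin := by
    apply Finset.eq_of_subset_of_card_le
    · intro j hj
      obtain ⟨v, hv, rfl⟩ := Finset.mem_image.mp hj
      exact hmapsD v hv
    · rw [hDcard, Finset.card_image_of_injOn hinjD, hcardIcc]
  have hdown_new : ∀ j < 2*m, Down j → fi (x (j+1)) = j + 1 := by
    intro j hj hd
    have : j ∈ Dfin := by
      rw [hDfin, Finset.mem_filter, Finset.mem_range]; exact ⟨hj, hd⟩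
    rw [← hDimg] at this
    obtain ⟨v, hv, he⟩ := Finset.mem_image.mp this
    rw [Finset.mem_Icc] at hv
    have hp := hfi_pos v hv.1 hv.2
    have hfiv : fi v = j + 1 := by omega
    have : x (j+1) = v := by rw [← hfiv]; exact hfi_spec v (by omega) hv.2
    rw [this, hfiv]
  have hfi1 : fi 1 = 0 := by
    have := hfi_le 0
    rw [hx0] at this
    omega
  -- the candidate word
  set w : List DyckStep := (List.range (2*m)).map
      (fun j => if fi (x (j+1)) = j + 1 then U else D) with hwdef
  have hwlen : w.length = 2*m := by simp [hwdef]
  have hwget : ∀ j, (hj : j < 2*m) →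
      w[j]'(by omega) = if fi (x (j+1)) = j + 1 then U else D := by
    intro j hj
    simp [hwdef]
  have hUp_of_not_new : ∀ j < 2*m, fi (x (j+1)) ≠ j + 1 → Up j := by
    intro j hj hnew
    rcases hclass j hj with h | h
    · exact h
    · exact absurd (hdown_new j hj h) hnew
  have hDown_of_new : ∀ j < 2*m, fi (x (j+1)) = j + 1 → Down j := by
    intro j hj hnew
    rcases hclass j hj with h | h
    · exfalso
      have := hUp_fi j hj h.1 h.2
      omega
    · exact h
  -- the reconstruction invariant
  have hInv : ∀ j ≤ 2*m,
      (sk (w.take j)) ≠ [] ∧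
      (sk (w.take j)).headD 0 = x j ∧
      (sk (w.take j)).Chain' (fun a b => b = fp a ∧ fi b < fi a) ∧
      (sk (w.take j)).getLast? = some 1 ∧
      (∀ v ∈ sk (w.take j), fi v ≤ j) ∧
      (2 ≤ ck (w.take j) ∧
        Finset.image x (Finset.range (j+1)) = Finset.Icc 1 (ck (w.take j) - 1)) ∧
      (sk (w.take j)).length + (w.take j).count D = 1 + (w.take j).count U := by
    intro j
    induction j with
    | zero =>
        intro _
        have e0 : w.take 0 = [] := rfl
        rw [e0]
        have es : sk [] = [1] := rfl
        have ec : ck [] = 2 := rfl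
        rw [es, ec]
        refine ⟨by simp, by simp [hx0], by simp [List.Chain', List.isChain_singleton], by simp, ?_, ⟨by omega, ?_⟩, by simp⟩
        · intro v hv
          simp at hv
          rw [hv, hfi1]
        · apply Finset.ext
          intro u
          simp only [Finset.mem_image, Finset.mem_range, Finset.mem_Icc]
          constructor
          · rintro ⟨i, hi, rfl⟩
            have : i = 0 := by omega
            rw [this, hx0]; omega
          · intro hu
            have : u = 1 := by omega
            exact ⟨0, by omega, by rw [hx0, this]⟩
    | succ j ihj =>
        intro hj1
        have hj : j < 2*m := by omega
        have hjw : j < w.length := by omega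
        obtain ⟨ihne, ihhead, ihchain, ihlast, ihmem, ⟨ihck2, ihseen⟩, ihlen⟩ := ihj (by omega)
        have hsteq : dstate (w.take (j+1)) = dstep (dstate (w.take j)) (w[j]'hjw) :=
          dstate_take_succ w j hjw
        have htke : w.take (j+1) = w.take j ++ [w[j]'hjw] := take_succ_eq w hjw
        rcases e : dstate (w.take j) with ⟨s, c, f⟩
        have es : sk (w.take j) = s := by rw [sk, e]
        have ec : ck (w.take j) = c := by rw [ck, e]
        rw [es] at ihne ihhead ihchain ihlast ihmem ihlen
        rw [ec] at ihck2 ihseen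
        rw [e] at hsteq
        by_cases hnew : fi (x (j+1)) = j + 1
        · -- U step, new vertex
          have hwU : w[j]'hjw = U := by rw [hwget j hj, if_pos hnew]
          obtain ⟨hd2, hdfp⟩ := hDown_of_new j hj hnew
          have hxj1le : x (j+1) ≤ m + 1 := hxle (j+1) (by omega)
          have hj1lt : j + 1 < 2*m := by
            rcases Nat.lt_or_ge (j+1) (2*m) with h | h
            · exact h
            · exfalso
              have : j + 1 = 2*m := by omega
              rw [this, hxn] at hd2; omega
          -- the new vertex is not in the seen set
          have hnotseen : x (j+1) ∉ Finset.image x (Finset.range (j+1)) := by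
            intro hcon
            obtain ⟨i, hi, hxi⟩ := Finset.mem_image.mp hcon
            rw [Finset.mem_range] at hi
            exact hfi_min (x (j+1)) i (by omega) hxi
          -- the new vertex equals c
          have hvc : x (j+1) = c := by
            obtain ⟨i0, hi0, hxi0⟩ := hnorm (j+1) hj1lt (by omega)
            have hmem0 : x (j+1) - 1 ∈ Finset.Icc 1 (c - 1) := by
              rw [← ihseen]
              exact Finset.mem_image.mpr ⟨i0, Finset.mem_range.mpr (by omega), hxi0⟩
            rw [Finset.mem_Icc] at hmem0
            by_contra hne
            have : x (j+1) ∈ Finset.Icc 1 (c - 1) := Finset.mem_Icc.mpr (by omega)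
            rw [← ihseen] at this
            exact hnotseen this
          have hs1 : sk (w.take (j+1)) = c :: s := by rw [sk, hsteq, hwU]; rfl
          have hc1 : ck (w.take (j+1)) = c + 1 := by rw [ck, hsteq, hwU]; rfl
          refine ⟨by simp [hs1], ?_, ?_, ?_, ?_, ⟨by omega, ?_⟩, ?_⟩
          · rw [hs1]
            simp [hvc]
          · rw [hs1]; unfold List.Chain' at ihchain ⊢; rw [List.isChain_cons]
            refine ⟨?_, ?_⟩
            · intro h hh
              have hh' : s.headD 0 = h := by
                cases s with
                | nil => simp at hh
                | cons a l => simp at hh ⊢; omega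
              rw [← hh', ihhead]
              constructor
              · rw [← hvc] at *
                exact hdfp
              · rw [← hvc, hnew]
                have := hfi_le j
                omega
            · exact ihchain
          · rw [hs1, List.getLast?_cons, ihlast]
            cases s with
            | nil => simp at ihne
            | cons a l => simp
          · intro v hv
            rw [hs1] at hv
            rcases List.mem_cons.mp hv with h | h
            · rw [h, ← hvc, hnew]
            · have := ihmem v h; omega
          · rw [hc1]
            have hrange : Finset.range (j+1+1) = insert (j+1) (Finset.range (j+1)) :=
              Finset.range_add_one
            rw [hrange, Finset.image_insert, ihseen, hvc]
            apply Finset.ext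
            intro u
            simp only [Finset.mem_insert, Finset.mem_Icc]
            omega
          · rw [hs1, htke, hwU]
            simp only [List.count_append, List.count_singleton', List.length_cons]
            simp
            omega
        · -- D step, up move
          have hwD : w[j]'hjw = D := by rw [hwget j hj, if_neg hnew]
          obtain ⟨hu2, hufp⟩ := hUp_of_not_new j hj hnew
          have hfij1 : fi (x (j+1)) ≤ j := by
            rw [hufp]
            have := hfp_fi (x j) hu2 (hxle j (by omega))
            have := hfi_le j
            omega
          -- the stack has at least two elements
          have hxj : s.headD 0 = x j := ihhead
          obtain ⟨a, l, rfl⟩ : ∃ a l, s = a :: l := by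
            cases s with
            | nil => exact absurd rfl ihne
            | cons a l => exact ⟨a, l, rfl⟩
          have ha : a = x j := by simpa using hxj
          obtain ⟨b, l', rfl⟩ : ∃ b l', l = b :: l' := by
            cases l with
            | nil =>
                exfalso
                simp at ihlast
                rw [ihlast] at ha
                omega
            | cons b l' => exact ⟨b, l', rfl⟩
          unfold List.Chain' at ihchain; rw [List.isChain_cons_cons] at ihchain
          have hb : b = x (j+1) := by
            rw [ihchain.1.1, ha, ← hufp]
          have hs1 : sk (w.take (j+1)) = b :: l' := by rw [sk, hsteq, hwD]; rfl
          have hc1 : ck (w.take (j+1)) = c := by rw [ck, hsteq, hwD]; rfl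
          refine ⟨by simp [hs1], ?_, ?_, ?_, ?_, ⟨by omega, ?_⟩, ?_⟩
          · rw [hs1]
            simp [hb]
          · rw [hs1]
            exact ihchain.2
          · rw [hs1]
            simpa using ihlast
          · intro v hv
            rw [hs1] at hv
            have := ihmem v (List.mem_cons_of_mem a hv)
            omega
          · rw [hc1]
            have hrange : Finset.range (j+1+1) = insert (j+1) (Finset.range (j+1)) :=
              Finset.range_add_one
            rw [hrange, Finset.image_insert, ihseen]
            apply Finset.insert_eq_self.mpr
            rw [← ihseen]
            refine Finset.mem_image.mpr ⟨fi (x (j+1)), Finset.mem_range.mpr (by omega), ?_⟩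
            exact hfi_spec (x (j+1)) (hpos _) (hxle (j+1) (by omega))
          · rw [hs1, htke, hwD]
            simp only [List.count_append, List.count_singleton', List.length_cons] at ihlen ⊢
            simp
            omega
  -- wrap up
  refine ⟨w, hwlen, ?_, ?_, ?_⟩
  · -- count U = count D
    obtain ⟨hne2m, hhead2m, hchain2m, hlast2m, _, _, hlen2m⟩ := hInv (2*m) (le_refl _)
    have htk : w.take (2*m) = w := by rw [← hwlen]; exact List.take_length
    rw [htk] at hne2m hhead2m hchain2m hlast2m hlen2m
    -- the final stack is [1]
    obtain ⟨a, l, he⟩ : ∃ a l, sk w = a :: l := by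
      cases hsk : sk w with
      | nil => exact absurd hsk hne2m
      | cons a l => exact ⟨a, l, rfl⟩
    have ha : a = 1 := by
      rw [he] at hhead2m
      simp at hhead2m
      rw [hhead2m, hxn]
    have hl : l = [] := by
      cases l with
      | nil => rfl
      | cons b l' =>
          exfalso
          rw [he] at hchain2m; unfold List.Chain' at hchain2m; rw [List.isChain_cons_cons] at hchain2m
          have := hchain2m.1.2
          rw [ha, hfi1] at this
          omega
    rw [he, ha, hl] at hlen2m
    simp at hlen2m
    omega
  · -- prefix condition
    intro i
    rcases le_or_gt i (2*m) with hi | hi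
    · obtain ⟨hne', _, _, _, _, _, hlen'⟩ := hInv i hi
      have : 1 ≤ (sk (w.take i)).length := List.length_pos_iff.mpr hne'
      omega
    · have htk : w.take i = w.take (2*m) := by
        rw [← hwlen, List.take_length, List.take_of_length_le (by omega)]
      rw [htk]
      obtain ⟨hne', _, _, _, _, _, hlen'⟩ := hInv (2*m) (le_refl _)
      have : 1 ≤ (sk (w.take (2*m))).length := List.length_pos_iff.mpr hne'
      omega
  · -- values
    intro j hj
    obtain ⟨hne', hhead', _⟩ := hInv j hj
    rw [tt, hhead']

end CatAux


open MeasureTheory ProbabilityTheory Filter Matrix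
open scoped ENNReal

noncomputable section
/-- The cyclic successor on `Fin k` (so that index `k` wraps around to `1`). -/
def cyclicSucc {k : ℕ} (j : Fin k) : Fin k :=
  ⟨(j.1 + 1) % k, Nat.mod_lt _ (Nat.lt_of_le_of_lt (Nat.zero_le _) j.isLt)⟩

/-- A `k`-tuple of positive integers is *admissible* if cyclically consecutive entries
differ (`i_1 ≠ i_2, …, i_{k-1} ≠ i_k, i_k ≠ i_1`). -/
def Admissible {k : ℕ} (t : Fin k → ℕ) : Prop :=
  (∀ j, 0 < t j) ∧ ∀ j : Fin k, t j ≠ t (cyclicSucc j)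

/-- A `k`-tuple is *normalized* if it is admissible and each entry `> 1` is preceded by an
entry equal to it minus one. -/
def Normalized {k : ℕ} (t : Fin k → ℕ) : Prop :=
  Admissible t ∧ ∀ j : Fin k, 1 < t j → ∃ j' : Fin k, j' < j ∧ t j' = t j - 1

/-- `E(ω)`: the set of unordered pairs `{i_j, i_{j+1}}` (with the cyclic convention
`i_{k+1} = i_1`) of the closed walk associated to the tuple. -/
def edgeSet {k : ℕ} (t : Fin k → ℕ) : Finset (Sym2 ℕ) :=
  Finset.image (fun j : Fin k => s(t j, t (cyclicSucc j))) Finset.univ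

/-- `V(ω)`: the set of entries of the tuple. -/
def vertexSet {k : ℕ} (t : Fin k → ℕ) : Finset ℕ :=
  Finset.image t Finset.univ

/-- The number of normalized `2m`-tuples `ω` with `|E(ω)| = m` and
`|V(ω)| = m + 1` is the Catalan number `Catalan(m) = (1/(m+1))·binom(2m, m)`. -/
theorem ncard_normalized_tuples_eq_catalan (m : ℕ) (hm : 0 < m) :
    Set.ncard {t : Fin (2 * m) → ℕ |
        Normalized t ∧ (edgeSet t).card = m ∧ (vertexSet t).card = m + 1} = catalan m ∧
      catalan m = (2 * m).choose m / (m + 1) := by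
  classical
  constructor
  · set S := {t : Fin (2 * m) → ℕ |
        Normalized t ∧ (edgeSet t).card = m ∧ (vertexSet t).card = m + 1} with hS
    set F : { p : DyckWord // p.semilength = m } → (Fin (2 * m) → ℕ) :=
      fun p => fun j => CatAux.tt p.1.toList j.1 with hF
    have hbasic : ∀ p : { p : DyckWord // p.semilength = m },
        (∀ i, (p.1.toList.take i).count DyckStep.D ≤ (p.1.toList.take i).count DyckStep.U) ∧
        p.1.toList.count DyckStep.U = p.1.toList.count DyckStep.D ∧
        p.1.toList.length = 2 * m := by
      intro p
      refine ⟨p.1.count_D_le_count_U, p.1.count_U_eq_count_D, ?_⟩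
      have := p.1.two_mul_semilength_eq_length
      rw [p.2] at this
      omega
    -- range F ⊆ S
    have hrange1 : ∀ p, F p ∈ S := by
      intro p
      obtain ⟨hw, hceq, hlen⟩ := hbasic p
      set w := p.1.toList with hwdef
      have hadj := CatAux.tt_adj hw hceq hlen
      have hfin := CatAux.tt_final hw hceq hlen
      have hpos := CatAux.tt_pos hw
      have hnorm := CatAux.tt_norm hw hceq hlen
      have hvim := CatAux.tt_vimage hw hceq hlen
      have hecd := CatAux.tt_ecard hw hceq hlen
      have hagree : ∀ j : Fin (2 * m),
          s(F p j, F p (cyclicSucc j)) = s(CatAux.tt w j.1, CatAux.tt w (j.1 + 1)) := by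
        intro j
        have hj := j.isLt
        rcases Nat.lt_or_ge (j.1 + 1) (2 * m) with h | h
        · have : (j.1 + 1) % (2 * m) = j.1 + 1 := Nat.mod_eq_of_lt h
          simp only [hF, cyclicSucc, this]
          rfl
        · have hj1 : j.1 + 1 = 2 * m := by omega
          have : (j.1 + 1) % (2 * m) = 0 := by rw [hj1]; exact Nat.mod_self _
          simp only [hF, cyclicSucc, this]
          rw [show CatAux.tt w 0 = 1 from rfl, hj1, hfin]
      refine ⟨⟨⟨fun j => hpos j.1, ?_⟩, ?_⟩, ?_, ?_⟩
      · -- adjacent distinct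
        intro j
        have hj := j.isLt
        intro hcon
        have : s(F p j, F p (cyclicSucc j)) = s(CatAux.tt w j.1, CatAux.tt w (j.1+1)) :=
          hagree j
        rcases Nat.lt_or_ge (j.1 + 1) (2 * m) with h | h
        · have he : (j.1 + 1) % (2 * m) = j.1 + 1 := Nat.mod_eq_of_lt h
          apply hadj j.1 hj
          show CatAux.tt w j.1 = CatAux.tt w (j.1+1)
          calc CatAux.tt w j.1 = F p j := rfl
            _ = F p (cyclicSucc j) := hcon
            _ = CatAux.tt w ((j.1+1) % (2*m)) := rfl
            _ = CatAux.tt w (j.1+1) := by rw [he]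
        · have hj1 : j.1 + 1 = 2 * m := by omega
          have he : (j.1 + 1) % (2 * m) = 0 := by rw [hj1]; exact Nat.mod_self _
          apply hadj j.1 hj
          show CatAux.tt w j.1 = CatAux.tt w (j.1+1)
          calc CatAux.tt w j.1 = F p j := rfl
            _ = F p (cyclicSucc j) := hcon
            _ = CatAux.tt w ((j.1+1) % (2*m)) := rfl
            _ = CatAux.tt w 0 := by rw [he]
            _ = 1 := rfl
            _ = CatAux.tt w (j.1+1) := by rw [hj1, hfin]
      · -- normalized
        intro j hj1
        obtain ⟨i', hi', ht'⟩ := hnorm j.1 (by omega) hj1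
        exact ⟨⟨i', by omega⟩, by rw [Fin.lt_def]; exact hi', ht'⟩
      · -- edge count
        have : edgeSet (F p) =
            Finset.image (fun i => s(CatAux.tt w i, CatAux.tt w (i+1)))
              (Finset.range (2*m)) := by
          apply Finset.Subset.antisymm
          · intro e he
            obtain ⟨j, _, rfl⟩ := Finset.mem_image.mp he
            exact Finset.mem_image.mpr ⟨j.1, Finset.mem_range.mpr j.isLt, (hagree j).symm⟩
          · intro e he
            obtain ⟨i, hi, rfl⟩ := Finset.mem_image.mp he
            rw [Finset.mem_range] at hi
            exact Finset.mem_image.mpr ⟨⟨i, hi⟩, Finset.mem_univ _, hagree ⟨i, hi⟩⟩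
        rw [edgeSet] at this ⊢
        rw [this, hecd]
      · -- vertex count
        have : vertexSet (F p) = Finset.image (CatAux.tt w) (Finset.range (2*m+1)) := by
          apply Finset.Subset.antisymm
          · intro v hv
            obtain ⟨j, _, rfl⟩ := Finset.mem_image.mp hv
            exact Finset.mem_image.mpr ⟨j.1, Finset.mem_range.mpr (by have := j.isLt; omega),
              rfl⟩
          · intro v hv
            obtain ⟨i, hi, rfl⟩ := Finset.mem_image.mp hv
            rw [Finset.mem_range] at hi
            rcases Nat.lt_or_ge i (2*m) with h | h
            · exact Finset.mem_image.mpr ⟨⟨i, h⟩, Finset.mem_univ _, rfl⟩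
            · have : i = 2*m := by omega
              refine Finset.mem_image.mpr ⟨⟨0, by omega⟩, Finset.mem_univ _, ?_⟩
              show CatAux.tt w 0 = CatAux.tt w i
              rw [this, hfin]
              rfl
        rw [vertexSet] at this ⊢
        rw [this, hvim, Nat.card_Icc]
        omega
    -- S ⊆ range F
    have hrange2 : ∀ t ∈ S, ∃ p, F p = t := by
      intro t ht
      obtain ⟨⟨⟨hpos, hadj⟩, hnorm⟩, hE, hV⟩ := ht
      have h2m : 0 < 2 * m := by omega
      set x : ℕ → ℕ := fun i => t ⟨i % (2*m), Nat.mod_lt _ h2m⟩ with hx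
      have hxt : ∀ j : Fin (2*m), x j.1 = t j := by
        intro j
        have : j.1 % (2*m) = j.1 := Nat.mod_eq_of_lt j.isLt
        simp only [hx]
        congr 1
        exact Fin.ext this
      have hx0 : x 0 = 1 := by
        have h1 : ∀ j' : Fin (2*m), ¬ j' < (⟨0, h2m⟩ : Fin (2*m)) := by
          intro j' hcon
          rw [Fin.lt_def] at hcon
          simp at hcon
        have h2 := hnorm ⟨0, h2m⟩
        have h3 := hpos ⟨0, h2m⟩
        have hxv : x 0 = t ⟨0, h2m⟩ := hxt ⟨0, h2m⟩
        by_contra hcon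
        have : 1 < t ⟨0, h2m⟩ := by rw [← hxv]; omega
        obtain ⟨j', hj', _⟩ := h2 this
        exact h1 j' hj'
      have hxn : x (2*m) = 1 := by
        have hxe : x (2*m) = x 0 := by
          show t _ = t _
          apply congrArg t
          apply Fin.ext
          simp
        rw [hxe, hx0]
      have hposx : ∀ j, 1 ≤ x j := fun j => hpos _
      have hcyc : ∀ (j : ℕ) (hj : j < 2*m), t (cyclicSucc ⟨j, hj⟩) = x (j+1) := by
        intro j hj
        rfl
      have hadjx : ∀ j < 2*m, x j ≠ x (j+1) := by
        intro j hj hcon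
        apply hadj ⟨j, hj⟩
        have e1 : t ⟨j, hj⟩ = x j := (hxt ⟨j, hj⟩).symm
        rw [e1, hcyc j hj]
        exact hcon
      have hnormx : ∀ j < 2*m, 1 < x j → ∃ j' < j, x j' = x j - 1 := by
        intro j hj h1
        rw [hxt ⟨j, hj⟩] at h1
        obtain ⟨j', hj', ht'⟩ := hnorm ⟨j, hj⟩ h1
        rw [Fin.lt_def] at hj'
        refine ⟨j'.1, hj', ?_⟩
        rw [hxt j', hxt ⟨j, hj⟩]
        exact ht'
      have hVx : Finset.image x (Finset.range (2*m+1)) = vertexSet t := by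
        apply Finset.Subset.antisymm
        · intro v hv
          obtain ⟨i, _, rfl⟩ := Finset.mem_image.mp hv
          exact Finset.mem_image.mpr ⟨_, Finset.mem_univ _, rfl⟩
        · intro v hv
          obtain ⟨j, _, rfl⟩ := Finset.mem_image.mp hv
          exact Finset.mem_image.mpr ⟨j.1, Finset.mem_range.mpr (by have := j.isLt; omega),
            hxt j⟩
      have hVIcc : Finset.image x (Finset.range (2*m+1)) = Finset.Icc 1 (m+1) := by
        apply CatAux.vimage_eq_Icc x hx0 hxn hposx hnormx
        rw [hVx]
        exact hV
      have hEx : Finset.image (fun j => s(x j, x (j+1))) (Finset.range (2*m)) = edgeSet t := by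
        apply Finset.Subset.antisymm
        · intro e he
          obtain ⟨i, hi, rfl⟩ := Finset.mem_image.mp he
          rw [Finset.mem_range] at hi
          refine Finset.mem_image.mpr ⟨⟨i, hi⟩, Finset.mem_univ _, ?_⟩
          have h1 : t ⟨i, hi⟩ = x i := (hxt ⟨i, hi⟩).symm
          have h2 : t (cyclicSucc ⟨i, hi⟩) = x (i+1) := hcyc i hi
          rw [h1, h2]
        · intro e he
          obtain ⟨j, _, rfl⟩ := Finset.mem_image.mp he
          refine Finset.mem_image.mpr ⟨j.1, Finset.mem_range.mpr j.isLt, ?_⟩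
          have h1 : t j = x j.1 := (hxt j).symm
          have h2 : t (cyclicSucc j) = x (j.1+1) := by
            rw [show j = (⟨j.1, j.isLt⟩ : Fin (2*m)) from rfl]
            exact hcyc j.1 j.isLt
          rw [h1, h2]
      have hEcard : (Finset.image (fun j => s(x j, x (j+1))) (Finset.range (2*m))).card = m := by
        rw [hEx]; exact hE
      obtain ⟨w, hwlen, hwceq, hwpre, hwval⟩ :=
        CatAux.reconstruction hm x hx0 hxn hposx hadjx hnormx hVIcc hEcard
      have hsemi : (⟨w, hwceq, hwpre⟩ : DyckWord).semilength = m := by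
        have := CatAux.count_UD w
        show w.count DyckStep.U = m
        omega
      refine ⟨⟨⟨w, hwceq, hwpre⟩, hsemi⟩, ?_⟩
      funext j
      show CatAux.tt w j.1 = t j
      rw [hwval j.1 (by have := j.isLt; omega), hxt j]
    -- injectivity
    have hinjF : Function.Injective F := by
      intro p q hpq
      by_contra hne
      have hne' : p.1.toList ≠ q.1.toList := by
        intro hcon
        apply hne
        apply Subtype.ext
        exact DyckWord.ext hcon
      obtain ⟨hw, hceq, hlen⟩ := hbasic p
      obtain ⟨hw', hceq', hlen'⟩ := hbasic q
      obtain ⟨j, hj, hne2⟩ := CatAux.tt_injective hm hw hw' hceq hceq' hlen hlen' hne'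
      exact hne2 (congrFun hpq ⟨j, hj⟩)
    have hrangeF : Set.range F = S := by
      apply Set.eq_of_subset_of_subset
      · rintro _ ⟨p, rfl⟩
        exact hrange1 p
      · intro t ht
        obtain ⟨p, hp⟩ := hrange2 t ht
        exact ⟨p, hp⟩
    calc S.ncard = (Set.range F).ncard := by rw [hrangeF]
      _ = Nat.card { p : DyckWord // p.semilength = m } := by
          rw [← Nat.card_coe_set_eq]
          exact Nat.card_range_of_injective hinjF
      _ = Fintype.card { p : DyckWord // p.semilength = m } := Nat.card_eq_fintype_card
      _ = catalan m := DyckWord.card_dyckWord_semilength_eq_catalan m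
  · rw [catalan_eq_centralBinom_div, Nat.centralBinom]

end
end

section
/- Fix λ > 0 and positive integers k and n with n ≥ k. Then E[Tr(M_{n,λ/n}^k)] = ∑_{ω ∈ N_k} (λ/n)^{|E(ω)|} · n!/(n − |V(ω)|)!, where N_k is the (finite) set of normalized k-tuples, and n!/(n−j)! counts the injective maps from {1,…,j} to {1,…,n}. -/
open MeasureTheory ProbabilityTheory Filter Matrix
open scoped ENNReal

noncomputable section

/-- The Bernoulli(`p`) distribution on `ℝ`: mass `p` at `1` and `1 - p` at `0`. -/
def bernoulliReal (p : ℝ) : Measure ℝ :=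
  ENNReal.ofReal p • Measure.dirac 1 + ENNReal.ofReal (1 - p) • Measure.dirac 0

/-- `M` is (as a random variable on `(Ω, P)`) the Erdős–Rényi adjacency matrix `M_{n,p}`:
a real symmetric `n × n` matrix with zero diagonal whose above-diagonal entries are
independent Bernoulli(`p`) random variables. -/
structure IsERMatrix {Ω : Type*} [MeasurableSpace Ω] (P : Measure Ω) (n : ℕ) (p : ℝ)
    (M : Ω → Matrix (Fin n) (Fin n) ℝ) : Prop where
  meas : ∀ i j, Measurable fun ω => M ω i j
  symm : ∀ ω i j, M ω i j = M ω j i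
  diag : ∀ ω i, M ω i i = 0
  indep : iIndepFun (m := fun _ => (inferInstance : MeasurableSpace ℝ))
    (fun q : {q : Fin n × Fin n // q.1 < q.2} => fun ω => M ω q.1.1 q.1.2) P
  law : ∀ i j : Fin n, i < j → P.map (fun ω => M ω i j) = bernoulliReal p

/-- Empirical spectral distribution of an `n × n` real symmetric matrix:
`(1/n) ∑ δ_{Λ i}` over the eigenvalues (with multiplicity). -/
def specMeasure {n : ℕ} (H : Matrix (Fin n) (Fin n) ℝ) : Measure ℝ :=
  if h : H.IsHermitian then (n : ℝ≥0∞)⁻¹ • ∑ i : Fin n, Measure.dirac (h.eigenvalues i) else 0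

/-- The standard semicircle distribution, with density `(2π)⁻¹ √(4 - x²) 1_{|x| ≤ 2}`. -/
def semicircle : Measure ℝ :=
  volume.withDensity (Set.indicator (Set.Icc (-2 : ℝ) 2)
    fun x => ENNReal.ofReal ((2 * Real.pi)⁻¹ * Real.sqrt (4 - x ^ 2)))

/-- Weak convergence of measures on `ℝ` along a filter: integrals of every
bounded continuous function converge. -/
def WeakTendsto {ι : Type*} (L : Filter ι) (μ : ι → Measure ℝ) (ν : Measure ℝ) : Prop :=
  ∀ f : ℝ → ℝ, Continuous f → (∃ C, ∀ x, |f x| ≤ C) →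
    Tendsto (fun i => ∫ x, f x ∂(μ i)) L (nhds (∫ x, f x ∂ν))

section ERAux


variable {n : ℕ} (A : Matrix (Fin n) (Fin n) ℝ)

noncomputable def pathProd {m : ℕ} (x : Fin n) (f : Fin (m + 1) → Fin n) : ℝ :=
  A x (f 0) * ∏ j : Fin m, A (f j.castSucc) (f j.succ)

lemma pow_apply_eq (k : ℕ) : ∀ (x y : Fin n),
    (A ^ (k + 1)) x y = ∑ g : Fin k → Fin n, pathProd A x (Fin.snoc g y) := by
  induction k with
  | zero =>
    intro x y
    have : (Fin.snoc (default : Fin 0 → Fin n) y : Fin 1 → Fin n) 0 = y := by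
      have h0 : (0 : Fin 1) = Fin.last 0 := rfl
      rw [h0, Fin.snoc_last]
    simp [pathProd, pow_one, this]
  | succ k ih =>
    intro x y
    rw [pow_succ, Matrix.mul_apply]
    have key : ∀ (z : Fin n) (g : Fin k → Fin n),
        pathProd A x (Fin.snoc (Fin.snoc g z) y) = pathProd A x (Fin.snoc g z) * A z y := by
      intro z g
      unfold pathProd
      rw [Fin.prod_univ_castSucc]
      have h0 : (Fin.snoc (Fin.snoc g z) y : Fin (k+2) → Fin n) 0 = (Fin.snoc g z : Fin (k+1) → Fin n) 0 := by
        have : (0 : Fin (k+2)) = (0 : Fin (k+1)).castSucc := by simp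
        rw [this, Fin.snoc_castSucc]
      have h3 : (Fin.snoc (Fin.snoc g z) y : Fin (k+2) → Fin n) (Fin.last k).castSucc = z := by
        rw [Fin.snoc_castSucc, Fin.snoc_last]
      have h4 : (Fin.snoc (Fin.snoc g z) y : Fin (k+2) → Fin n) (Fin.last k).succ = y := by
        rw [Fin.succ_last, Fin.snoc_last]
      rw [h0, h3, h4]
      have hfac : ∀ j : Fin k,
          A ((Fin.snoc (Fin.snoc g z) y : Fin (k+2) → Fin n) j.castSucc.castSucc)
            ((Fin.snoc (Fin.snoc g z) y : Fin (k+2) → Fin n) j.castSucc.succ)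
          = A ((Fin.snoc g z : Fin (k+1) → Fin n) j.castSucc) ((Fin.snoc g z : Fin (k+1) → Fin n) j.succ) := by
        intro j
        rw [Fin.snoc_castSucc, Fin.succ_castSucc, Fin.snoc_castSucc, Fin.snoc_castSucc]
      rw [Finset.prod_congr rfl (fun j _ => hfac j)]
      ring
    calc ∑ z, (A ^ (k+1)) x z * A z y
        = ∑ z, ∑ g : Fin k → Fin n, pathProd A x (Fin.snoc g z) * A z y := by
          simp_rw [ih, Finset.sum_mul]
      _ = ∑ p : Fin n × (Fin k → Fin n), pathProd A x (Fin.snoc (Fin.snoc p.2 p.1) y) := by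
          rw [Fintype.sum_prod_type]
          exact Finset.sum_congr rfl fun z _ => Finset.sum_congr rfl fun g _ => (key z g).symm
      _ = ∑ g' : Fin (k+1) → Fin n, pathProd A x (Fin.snoc g' y) := by
          apply Fintype.sum_equiv (Fin.snocEquiv (fun _ : Fin (k+1) => Fin n))
          intro p
          rfl

lemma trace_pow_eq (k : ℕ) :
    Matrix.trace (A ^ (k + 1)) = ∑ i : Fin (k+1) → Fin n, ∏ j : Fin (k+1), A (i j) (i (cyclicSucc j)) := by
  rw [Matrix.trace]
  simp only [Matrix.diag]
  rw [← Equiv.sum_comp (Fin.consEquiv (fun _ : Fin (k+1) => Fin n))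
    (fun i => ∏ j : Fin (k+1), A (i j) (i (cyclicSucc j)))]
  rw [Fintype.sum_prod_type]
  simp_rw [pow_apply_eq]
  apply Finset.sum_congr rfl; intro x _
  apply Finset.sum_congr rfl; intro g _
  show pathProd A x (Fin.snoc g x) = ∏ j : Fin (k+1), A ((Fin.cons x g : Fin (k+1) → Fin n) j) ((Fin.cons x g : Fin (k+1) → Fin n) (cyclicSucc j))
  rw [Fin.prod_univ_succ]
  unfold pathProd
  congr 1
  · rw [Fin.cons_zero]
    congr 1
    · -- (Fin.snoc g x) 0 = Fin.cons x g (cyclicSucc 0)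
      rcases Nat.eq_zero_or_pos k with hk | hk
      · subst hk
        have : cyclicSucc (0 : Fin 1) = 0 := rfl
        rw [this, Fin.cons_zero]
        have : (0 : Fin 1) = Fin.last 0 := rfl
        rw [this, Fin.snoc_last]
      · have hc : cyclicSucc (0 : Fin (k+1)) = (⟨1, by omega⟩ : Fin (k+1)) := by
          simp [cyclicSucc, Nat.mod_eq_of_lt (by omega : 1 < k + 1)]
        rw [hc]
        have h1 : (⟨1, by omega⟩ : Fin (k+1)) = Fin.succ (⟨0, hk⟩ : Fin k) := rfl
        rw [h1, Fin.cons_succ]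
        have h2 : (0 : Fin (k+1)) = Fin.castSucc (⟨0, hk⟩ : Fin k) := rfl
        rw [h2, Fin.snoc_castSucc]
  · apply Finset.prod_congr rfl
    intro m _
    congr 1
    · rw [Fin.cons_succ, Fin.snoc_castSucc]
    · -- snoc g x (m.succ) = cons x g (cyclicSucc m.succ)
      rcases m with ⟨mv, hm⟩
      by_cases hemv : mv + 1 = k
      · have hc : cyclicSucc ((⟨mv, hm⟩ : Fin k).succ) = (0 : Fin (k+1)) := by
          simp only [cyclicSucc, Fin.succ]
          apply Fin.ext
          simp [hemv]
        rw [hc, Fin.cons_zero]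
        have : (⟨mv, hm⟩ : Fin k).succ = Fin.last k := by
          apply Fin.ext; simp [hemv]
        rw [this, Fin.snoc_last]
      · have hmv1 : mv + 1 < k := by omega
        have hc : cyclicSucc ((⟨mv, hm⟩ : Fin k).succ) = Fin.succ (⟨mv+1, hmv1⟩ : Fin k) := by
          simp only [cyclicSucc, Fin.succ]
          apply Fin.ext
          simp [Nat.mod_eq_of_lt (by omega : mv + 1 + 1 < k + 1)]
        rw [hc, Fin.cons_succ]
        have : (⟨mv, hm⟩ : Fin k).succ = Fin.castSucc (⟨mv+1, hmv1⟩ : Fin k) := rfl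
        rw [this, Fin.snoc_castSucc]




lemma integrable_dirac_real (f : ℝ → ℝ) (hf : Measurable f) (a : ℝ) :
    Integrable f (Measure.dirac a) := by
  refine ⟨hf.aestronglyMeasurable, ?_⟩
  rw [HasFiniteIntegral, lintegral_dirac' a (by measurability)]
  exact ENNReal.coe_lt_top

lemma bernoulliReal_integral {p : ℝ} (h0 : 0 ≤ p) : ∫ x, x ∂(bernoulliReal p) = p := by
  unfold bernoulliReal
  rw [integral_add_measure, integral_smul_measure, integral_smul_measure,
    integral_dirac, integral_dirac]
  · simp [ENNReal.toReal_ofReal h0]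
  · exact (integrable_dirac_real id measurable_id 1).smul_measure ENNReal.ofReal_ne_top
  · exact (integrable_dirac_real id measurable_id 0).smul_measure ENNReal.ofReal_ne_top

lemma bernoulliReal_ae (p : ℝ) : ∀ᵐ x ∂(bernoulliReal p), x ∈ ({0, 1} : Set ℝ) := by
  have hms : MeasurableSet (({0, 1} : Set ℝ)ᶜ) :=
    (Set.Finite.measurableSet (by simp : ({0,1} : Set ℝ).Finite)).compl
  rw [ae_iff]
  have hset : {x : ℝ | ¬ x ∈ ({0,1}:Set ℝ)} = ({0,1} : Set ℝ)ᶜ := rfl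
  have h1 : Measure.dirac (1:ℝ) {x : ℝ | ¬ x ∈ ({0,1}:Set ℝ)} = 0 := by
    rw [hset, Measure.dirac_apply' _ hms]; simp
  have h2 : Measure.dirac (0:ℝ) {x : ℝ | ¬ x ∈ ({0,1}:Set ℝ)} = 0 := by
    rw [hset, Measure.dirac_apply' _ hms]; simp
  unfold bernoulliReal
  rw [Measure.add_apply, Measure.smul_apply, Measure.smul_apply, h1, h2]
  simp

/-! ### Sym2 pair machinery -/

def sym2pair {n : ℕ} (e : Sym2 (Fin n)) : Fin n × Fin n :=
  Sym2.lift ⟨fun a b => (a ⊓ b, a ⊔ b), fun a b => by simp [inf_comm, sup_comm]⟩ e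

lemma sym2pair_mk {n : ℕ} (a b : Fin n) : sym2pair s(a, b) = (a ⊓ b, a ⊔ b) := rfl

lemma sym2_mk_sym2pair {n : ℕ} (e : Sym2 (Fin n)) :
    s((sym2pair e).1, (sym2pair e).2) = e := by
  induction e using Sym2.ind with
  | _ a b =>
    rw [sym2pair_mk]
    rcases le_total a b with h | h
    · simp [inf_eq_left.2 h, sup_eq_right.2 h]
    · simp only [inf_eq_right.2 h, sup_eq_left.2 h]
      exact Sym2.eq_swap
lemma sym2pair_lt {n : ℕ} {e : Sym2 (Fin n)} (h : ¬ e.IsDiag) :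
    (sym2pair e).1 < (sym2pair e).2 := by
  induction e using Sym2.ind with
  | _ a b =>
    rw [Sym2.mk_isDiag_iff] at h
    rw [sym2pair_mk]
    rcases lt_or_gt_of_ne h with h' | h'
    · simpa [inf_eq_left.2 h'.le, sup_eq_right.2 h'.le] using h'
    · simpa [inf_eq_right.2 h'.le, sup_eq_left.2 h'.le] using h'

/-! ### product of independent rvs -/

lemma integral_finset_prod_of_iIndep {ι Ω : Type*} [MeasurableSpace Ω] {μ : Measure Ω}
    [IsProbabilityMeasure μ] {f : ι → Ω → ℝ}
    (hind : iIndepFun (m := fun _ => (inferInstance : MeasurableSpace ℝ)) f μ)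
    (hm : ∀ i, Measurable (f i)) (s : Finset ι) :
    ∫ ω, ∏ i ∈ s, f i ω ∂μ = ∏ i ∈ s, ∫ ω, f i ω ∂μ := by
  classical
  induction s using Finset.induction_on with
  | empty => simp
  | insert a s hi ih =>
    have hIndep : IndepFun (∏ j ∈ s, f j) (f a) μ :=
      hind.indepFun_finsetProd_of_notMem hm hi
    have hX : AEStronglyMeasurable (∏ j ∈ s, f j) μ := by
      have : Measurable (∏ j ∈ s, f j) := by
        simp_rw [Finset.prod_fn]
        exact Finset.measurable_prod s fun j _ => hm j
      exact this.aestronglyMeasurable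
    have hmul := hIndep.integral_mul_eq_mul_integral hX (hm a).aestronglyMeasurable
    have hfun : ∀ ω, ((∏ j ∈ s, f j) * f a) ω = ∏ i ∈ insert a s, f i ω := by
      intro ω
      rw [Finset.prod_insert hi]
      simp [Finset.prod_apply, mul_comm]
    have hXint : integral μ (∏ j ∈ s, f j) = ∫ ω, ∏ j ∈ s, f j ω ∂μ := by
      congr 1
      funext ω
      simp [Finset.prod_apply]
    rw [Finset.prod_insert hi, ← ih,
      show (fun ω => ∏ i ∈ insert a s, f i ω) = (∏ j ∈ s, f j) * f a from funext fun ω => (hfun ω).symm,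
      hmul, hXint]
    exact mul_comm _ _


variable {Ω : Type*} [MeasurableSpace Ω] {P : Measure Ω} [IsProbabilityMeasure P]
  {n : ℕ} {p : ℝ} {M : Ω → Matrix (Fin n) (Fin n) ℝ}

lemma ER_ae01 (hM : IsERMatrix P n p M) :
    ∀ᵐ ω ∂P, ∀ a b : Fin n, M ω a b ∈ ({0, 1} : Set ℝ) := by
  have hms : MeasurableSet (({0,1} : Set ℝ)ᶜ) :=
    (Set.Finite.measurableSet (by simp : ({0,1} : Set ℝ).Finite)).compl
  have key : ∀ a b : Fin n, a < b → ∀ᵐ ω ∂P, M ω a b ∈ ({0,1} : Set ℝ) := by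
    intro a b hab
    rw [ae_iff]
    have hset : {ω | ¬ M ω a b ∈ ({0,1}:Set ℝ)} = (fun ω => M ω a b) ⁻¹' (({0,1} : Set ℝ)ᶜ) := rfl
    rw [hset, ← Measure.map_apply (hM.meas a b) hms, hM.law a b hab]
    have hb := bernoulliReal_ae p
    rw [ae_iff] at hb
    exact hb
  rw [ae_all_iff]; intro a; rw [ae_all_iff]; intro b
  rcases lt_trichotomy a b with hab | hab | hab
  · exact key a b hab
  · subst hab
    filter_upwards with ω
    rw [hM.diag ω a]; simp
  · have hsymm : (fun ω => M ω a b) = fun ω => M ω b a := funext fun ω => hM.symm ω a b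
    have := key b a hab
    filter_upwards [this] with ω hω
    rw [hM.symm ω a b]; exact hω

lemma ER_integral_entry (hM : IsERMatrix P n p M) (h0 : 0 ≤ p) {a b : Fin n} (hab : a ≠ b) :
    ∫ ω, M ω a b ∂P = p := by
  have key : ∀ a b : Fin n, a < b → ∫ ω, M ω a b ∂P = p := by
    intro a b hab
    have h1 : ∫ x, x ∂(P.map (fun ω => M ω a b)) = ∫ ω, M ω a b ∂P :=
      integral_map (hM.meas a b).aemeasurable aestronglyMeasurable_id
    rw [← h1, hM.law a b hab, bernoulliReal_integral h0]
  rcases lt_or_gt_of_ne hab with h | h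
  · exact key a b h
  · rw [show (fun ω => M ω a b) = fun ω => M ω b a from funext fun ω => hM.symm ω a b]
    exact key b a h

lemma ER_walk_integral (hM : IsERMatrix P n p M) (h0 : 0 ≤ p) {k : ℕ} (i : Fin k → Fin n) :
    ∫ ω, ∏ j : Fin k, M ω (i j) (i (cyclicSucc j)) ∂P =
      if ∀ j, i j ≠ i (cyclicSucc j)
      then p ^ (Finset.image (fun j : Fin k => s(i j, i (cyclicSucc j))) Finset.univ).card
      else 0 := by
  classical
  by_cases hadm : ∀ j, i j ≠ i (cyclicSucc j)
  case neg =>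
    rw [if_neg hadm]
    push_neg at hadm
    obtain ⟨j0, hj0⟩ := hadm
    have hz : ∀ ω, ∏ j : Fin k, M ω (i j) (i (cyclicSucc j)) = 0 := by
      intro ω
      apply Finset.prod_eq_zero (Finset.mem_univ j0)
      rw [← hj0]
      exact hM.diag ω _
    simp [hz]
  case pos =>
    rw [if_pos hadm]
    set E := Finset.image (fun j : Fin k => s(i j, i (cyclicSucc j))) Finset.univ with hE
    have hEnd : ∀ e ∈ E, ¬ e.IsDiag := by
      intro e he
      rw [hE, Finset.mem_image] at he
      obtain ⟨j, _, rfl⟩ := he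
      rw [Sym2.mk_isDiag_iff]
      exact hadm j
    set φ : {x // x ∈ E} → {q : Fin n × Fin n // q.1 < q.2} :=
      fun e => ⟨sym2pair e.1, sym2pair_lt (hEnd e.1 e.2)⟩ with hφ
    have hinj : ∀ x ∈ E.attach, ∀ y ∈ E.attach, φ x = φ y → x = y := by
      intro e1 _ e2 _ h
      have h' : sym2pair e1.1 = sym2pair e2.1 := congrArg Subtype.val h
      have h2 := congrArg (fun q : Fin n × Fin n => s(q.1, q.2)) h'
      simp only [sym2_mk_sym2pair] at h2
      exact Subtype.ext h2
    set S : Finset {q : Fin n × Fin n // q.1 < q.2} := E.attach.image φ with hS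
    have hScard : S.card = E.card := by
      rw [hS, Finset.card_image_of_injOn fun x hx y hy h => hinj x hx y hy h, Finset.card_attach]
    have hpair : ∀ ω (a b : Fin n), M ω a b = M ω (a ⊓ b) (a ⊔ b) := by
      intro ω a b
      rcases le_total a b with h | h
      · rw [inf_eq_left.2 h, sup_eq_right.2 h]
      · rw [inf_eq_right.2 h, sup_eq_left.2 h]
        exact hM.symm ω a b
    have hae : (fun ω => ∏ j : Fin k, M ω (i j) (i (cyclicSucc j))) =ᵐ[P]
        (fun ω => ∏ q ∈ S, M ω q.1.1 q.1.2) := by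
      filter_upwards [ER_ae01 hM] with ω hω
      have hstep1 : ∏ j : Fin k, M ω (i j) (i (cyclicSucc j))
          = ∏ j : Fin k,
            (fun e : Sym2 (Fin n) => M ω (sym2pair e).1 (sym2pair e).2) (s(i j, i (cyclicSucc j))) := by
        apply Finset.prod_congr rfl
        intro j _
        simp only [sym2pair_mk]
        exact hpair ω _ _
      rw [hstep1, Finset.prod_comp (fun e : Sym2 (Fin n) => M ω (sym2pair e).1 (sym2pair e).2)
        (fun j : Fin k => s(i j, i (cyclicSucc j)))]
      have hpow : ∀ e ∈ E,
          (M ω (sym2pair e).1 (sym2pair e).2) ^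
            (Finset.filter (fun j => s(i j, i (cyclicSucc j)) = e) Finset.univ).card
          = M ω (sym2pair e).1 (sym2pair e).2 := by
        intro e he
        have hcard : (Finset.filter (fun j => s(i j, i (cyclicSucc j)) = e) Finset.univ).card ≠ 0 := by
          rw [hE, Finset.mem_image] at he
          obtain ⟨j, _, hj⟩ := he
          exact Finset.card_ne_zero_of_mem (Finset.mem_filter.2 ⟨Finset.mem_univ j, hj⟩)
        rcases hω (sym2pair e).1 (sym2pair e).2 with hv | hv
        · rw [hv, zero_pow hcard]
        · rw [Set.mem_singleton_iff] at hv
          rw [hv, one_pow]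
      rw [Finset.prod_congr rfl hpow]
      rw [← Finset.prod_attach E (fun e => M ω (sym2pair e).1 (sym2pair e).2)]
      rw [hS, Finset.prod_image hinj]
    rw [integral_congr_ae hae,
      integral_finset_prod_of_iIndep hM.indep (fun q => hM.meas q.1.1 q.1.2) S,
      Finset.prod_congr rfl (fun q (_ : q ∈ S) => ER_integral_entry hM h0 (ne_of_lt q.2)),
      Finset.prod_const, hScard]




namespace ERComb

variable {k : ℕ} {β γ : Type*} [DecidableEq β] [DecidableEq γ]

/-- first occurrence index of the value `i j`. -/
def fo (i : Fin k → β) (j : Fin k) : Fin k :=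
  (Finset.univ.filter (fun j' => i j' = i j)).min' ⟨j, by simp⟩

lemma fo_apply (i : Fin k → β) (j : Fin k) : i (fo i j) = i j := by
  have := Finset.min'_mem (Finset.univ.filter (fun j' => i j' = i j)) ⟨j, by simp⟩
  simpa [fo] using (Finset.mem_filter.1 this).2

lemma fo_le (i : Fin k → β) (j : Fin k) : fo i j ≤ j :=
  Finset.min'_le _ _ (by simp)

lemma fo_congr {i : Fin k → β} {j j' : Fin k} (h : i j = i j') : fo i j = fo i j' := by
  unfold fo
  congr 1
  apply Finset.filter_congr
  intro x _
  simp [h]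

lemma fo_min {i : Fin k → β} {j x : Fin k} (h : i x = i j) : fo i j ≤ x :=
  Finset.min'_le _ _ (by simp [h])

lemma fo_idem (i : Fin k → β) (j : Fin k) : fo i (fo i j) = fo i j :=
  fo_congr (fo_apply i j)

def FO (i : Fin k → β) : Finset (Fin k) := Finset.image (fo i) Finset.univ

lemma fo_mem_FO (i : Fin k → β) (j : Fin k) : fo i j ∈ FO i :=
  Finset.mem_image_of_mem _ (Finset.mem_univ j)

lemma FO_fixed {i : Fin k → β} {x : Fin k} (hx : x ∈ FO i) : fo i x = x := by
  obtain ⟨j, _, rfl⟩ := Finset.mem_image.1 hx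
  exact fo_idem i j

/-- normalization of a tuple -/
def nu (i : Fin k → β) (j : Fin k) : ℕ := (FO i ∩ Finset.Iic (fo i j)).card

lemma nu_pos (i : Fin k → β) (j : Fin k) : 0 < nu i j := by
  apply Finset.card_pos.2
  exact ⟨fo i j, Finset.mem_inter.2 ⟨fo_mem_FO i j, Finset.mem_Iic.2 le_rfl⟩⟩

lemma nu_eq_of_eq {i : Fin k → β} {j j' : Fin k} (h : i j = i j') : nu i j = nu i j' := by
  unfold nu
  rw [fo_congr h]

lemma fo_ne_of_ne {i : Fin k → β} {j j' : Fin k} (h : i j ≠ i j') : fo i j ≠ fo i j' := by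
  intro he
  apply h
  rw [← fo_apply i j, he]
  exact fo_apply i j' 

lemma nu_lt_of_fo_lt {i : Fin k → β} {j j' : Fin k} (h : fo i j < fo i j') :
    nu i j < nu i j' := by
  apply Finset.card_lt_card
  constructor
  · intro x hx
    rcases Finset.mem_inter.1 hx with ⟨h1, h2⟩
    exact Finset.mem_inter.2 ⟨h1, Finset.mem_Iic.2 ((Finset.mem_Iic.1 h2).trans h.le)⟩
  · intro hsub
    have : fo i j' ∈ FO i ∩ Finset.Iic (fo i j) :=
      hsub (Finset.mem_inter.2 ⟨fo_mem_FO i j', Finset.mem_Iic.2 le_rfl⟩)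
    have := Finset.mem_Iic.1 (Finset.mem_inter.1 this).2
    exact absurd this (not_le.2 h)

lemma eq_of_nu_eq {i : Fin k → β} {j j' : Fin k} (h : nu i j = nu i j') : i j = i j' := by
  by_contra hne
  rcases lt_or_gt_of_ne (fo_ne_of_ne hne) with hlt | hlt
  · exact absurd h (ne_of_lt (nu_lt_of_fo_lt hlt))
  · exact absurd h.symm (ne_of_lt (nu_lt_of_fo_lt hlt))

lemma nu_congr {i : Fin k → β} {i' : Fin k → γ}
    (h : ∀ a b : Fin k, i a = i b ↔ i' a = i' b) : nu i = nu i' := by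
  have hfo : fo i = fo i' := by
    funext j
    unfold fo
    congr 1
    apply Finset.filter_congr
    intro x _
    exact h x j
  funext j
  unfold nu FO
  rw [hfo]

/-- normalized property of `nu` -/
lemma nu_normal (i : Fin k → β) (j : Fin k) (h : 1 < nu i j) :
    ∃ j' : Fin k, j' < j ∧ nu i j' = nu i j - 1 := by
  classical
  set S := FO i ∩ Finset.Iic (fo i j) with hSdef
  have hmem : fo i j ∈ S :=
    Finset.mem_inter.2 ⟨fo_mem_FO i j, Finset.mem_Iic.2 le_rfl⟩
  set T := S.erase (fo i j) with hTdef
  have hTne : T.Nonempty := by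
    rw [← Finset.card_pos, Finset.card_erase_of_mem hmem]
    have : 1 < S.card := h
    omega
  set f' := T.max' hTne with hf'
  have hf'T : f' ∈ T := Finset.max'_mem _ _
  have hf'S : f' ∈ S := Finset.mem_of_mem_erase hf'T
  have hf'FO : f' ∈ FO i := (Finset.mem_inter.1 hf'S).1
  have hf'ne : f' ≠ fo i j := Finset.ne_of_mem_erase hf'T
  have hf'lt : f' < fo i j :=
    lt_of_le_of_ne (Finset.mem_Iic.1 (Finset.mem_inter.1 hf'S).2) hf'ne
  refine ⟨f', lt_of_lt_of_le hf'lt (fo_le i j), ?_⟩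
  have hfof' : fo i f' = f' := FO_fixed hf'FO
  have hset : FO i ∩ Finset.Iic (fo i f') = T := by
    rw [hfof']
    apply Finset.ext
    intro x
    constructor
    · intro hx
      rcases Finset.mem_inter.1 hx with ⟨h1, h2⟩
      have hxf : x ≤ f' := Finset.mem_Iic.1 h2
      refine Finset.mem_erase.2 ⟨?_, Finset.mem_inter.2 ⟨h1, Finset.mem_Iic.2 (hxf.trans hf'lt.le)⟩⟩
      exact ne_of_lt (lt_of_le_of_lt hxf hf'lt)
    · intro hx
      have hxS : x ∈ S := Finset.mem_of_mem_erase hx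
      refine Finset.mem_inter.2 ⟨(Finset.mem_inter.1 hxS).1, Finset.mem_Iic.2 ?_⟩
      exact Finset.le_max' _ _ hx
  show (FO i ∩ Finset.Iic (fo i f')).card = nu i j - 1
  rw [hset, hTdef, Finset.card_erase_of_mem hmem]
  rfl

lemma nu_normalized {i : Fin k → β} (hadm : ∀ j, i j ≠ i (cyclicSucc j)) :
    Normalized (nu i) := by
  refine ⟨⟨fun j => nu_pos i j, fun j hje => ?_⟩, fun j hj => nu_normal i j hj⟩
  exact hadm j (eq_of_nu_eq hje)

end ERComb

namespace ERComb
section NuFixed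
variable {k : ℕ} {t : Fin k → ℕ}

lemma occ_sub (ht : Normalized t) : ∀ (c : ℕ) (j : Fin k), 1 ≤ t j - c → ∃ j', t j' = t j - c := by
  intro c
  induction c with
  | zero => intro j _; exact ⟨j, by simp⟩
  | succ c ih =>
    intro j h
    have h1 : 1 ≤ t j - c := by omega
    obtain ⟨j', hj'⟩ := ih j h1
    have h2 : 1 < t j' := by omega
    obtain ⟨j'', _, hj''⟩ := ht.2 j' h2
    exact ⟨j'', by omega⟩

lemma occ (ht : Normalized t) {j : Fin k} {m : ℕ} (h1 : 1 ≤ m) (h2 : m ≤ t j) :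
    ∃ j', t j' = m := by
  obtain ⟨j', hj'⟩ := occ_sub ht (t j - m) j (by omega)
  exact ⟨j', by omega⟩

lemma fo_lt_succ (ht : Normalized t) {j j' : Fin k} (h : t j + 1 = t j') :
    fo t j < fo t j' := by
  have h2 : 1 < t (fo t j') := by rw [fo_apply t j']; have := ht.1.1 j; omega
  obtain ⟨jp, hlt, hjp⟩ := ht.2 (fo t j') h2
  have hval : t jp = t j := by rw [fo_apply t j'] at hjp; omega
  exact lt_of_le_of_lt (fo_min hval) hlt

lemma fo_lt_of_val_lt (ht : Normalized t) :
    ∀ (d : ℕ) {j j' : Fin k}, t j + d = t j' → 0 < d → fo t j < fo t j' := by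
  intro d
  induction d with
  | zero => intro j j' _ h0; omega
  | succ d ih =>
    intro j j' hsum _
    rcases Nat.eq_zero_or_pos d with hd | hd
    · subst hd
      exact fo_lt_succ ht (by omega)
    · obtain ⟨j'', hj''⟩ := occ ht (m := t j + d) (j := j') (by have := ht.1.1 j; omega) (by omega)
      exact lt_trans (ih (j' := j'') (by omega) hd) (fo_lt_succ ht (j := j'') (j' := j') (by omega))

lemma nu_fixed (ht : Normalized t) : nu t = t := by
  funext j
  have hcard : (FO t ∩ Finset.Iic (fo t j)).card = (Finset.Icc 1 (t j)).card := by
    apply Finset.card_bij (fun x _ => t x)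
    · intro x hx
      rcases Finset.mem_inter.1 hx with ⟨h1, h2⟩
      have hpos : 1 ≤ t x := ht.1.1 x
      have hle : t x ≤ t j := by
        by_contra hgt
        push_neg at hgt
        have hfo : fo t j < fo t x := fo_lt_of_val_lt ht (t x - t j) (by omega) (by omega)
        rw [FO_fixed h1] at hfo
        exact absurd (Finset.mem_Iic.1 h2) (not_le.2 hfo)
      exact Finset.mem_Icc.2 ⟨hpos, hle⟩
    · intro x1 hx1 x2 hx2 he
      have hfo : fo t x1 = fo t x2 := fo_congr he
      rwa [FO_fixed (Finset.mem_inter.1 hx1).1, FO_fixed (Finset.mem_inter.1 hx2).1] at hfo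
    · intro m hm
      rcases Finset.mem_Icc.1 hm with ⟨h1, h2⟩
      obtain ⟨j', hj'⟩ := occ ht h1 h2
      refine ⟨fo t j', Finset.mem_inter.2 ⟨fo_mem_FO t j', Finset.mem_Iic.2 ?_⟩, by
        rw [fo_apply t j']; exact hj'⟩
      rcases eq_or_lt_of_le h2 with he | hlt
      · exact le_of_eq (fo_congr (by omega))
      · exact le_of_lt (fo_lt_of_val_lt ht (t j - m) (by omega) (by omega))
  show (FO t ∩ Finset.Iic (fo t j)).card = t j
  rw [hcard, Nat.card_Icc]
  omega

end NuFixed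
end ERComb

namespace ERComb
variable {k n : ℕ} {t : Fin k → ℕ}

lemma card_image_eq_ker {ι γ δ : Type*} [Fintype ι] [DecidableEq γ] [DecidableEq δ]
    {f : ι → γ} {g : ι → δ} (h : ∀ a b, f a = f b ↔ g a = g b) :
    (Finset.image f Finset.univ).card = (Finset.image g Finset.univ).card := by
  classical
  apply Finset.card_bij (fun b hb => g (Finset.mem_image.1 hb).choose)
  · intro b hb
    exact Finset.mem_image_of_mem _ (Finset.mem_univ _)
  · intro b1 hb1 b2 hb2 he
    have s1 := (Finset.mem_image.1 hb1).choose_spec.2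
    have s2 := (Finset.mem_image.1 hb2).choose_spec.2
    rw [← s1, ← s2]
    exact (h _ _).2 he
  · intro d hd
    obtain ⟨a, _, rfl⟩ := Finset.mem_image.1 hd
    refine ⟨f a, Finset.mem_image_of_mem _ (Finset.mem_univ a), ?_⟩
    have s := (Finset.mem_image.1 (Finset.mem_image_of_mem f (Finset.mem_univ a))).choose_spec.2
    exact (h _ _).1 s

def pick (t : Fin k → ℕ) (v : ℕ) (hv : v ∈ vertexSet t) : Fin k :=
  (Finset.mem_image.1 hv).choose

lemma pick_spec {t : Fin k → ℕ} {v : ℕ} (hv : v ∈ vertexSet t) : t (pick t v hv) = v :=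
  (Finset.mem_image.1 hv).choose_spec.2

lemma mem_vertexSet (t : Fin k → ℕ) (j : Fin k) : t j ∈ vertexSet t :=
  Finset.mem_image_of_mem _ (Finset.mem_univ j)

lemma fiber_card (ht : Normalized t) :
    (Finset.univ.filter (fun i : Fin k → Fin n => nu i = t)).card
      = n.descFactorial (vertexSet t).card := by
  classical
  have hdf : n.descFactorial (vertexSet t).card
      = Fintype.card ({v // v ∈ vertexSet t} ↪ Fin n) := by
    rw [Fintype.card_embedding_eq, Fintype.card_coe, Fintype.card_fin]
  rw [hdf, ← Finset.card_univ]
  apply Finset.card_bij (fun (i : Fin k → Fin n) (hi : i ∈ Finset.univ.filter (fun i => nu i = t)) =>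
    (⟨fun v => i (pick t v.1 v.2), by
      intro v1 v2 he
      have hnu : nu i = t := (Finset.mem_filter.1 hi).2
      have h1 : nu i (pick t v1.1 v1.2) = nu i (pick t v2.1 v2.2) := nu_eq_of_eq he
      rw [hnu] at h1
      apply Subtype.ext
      rw [← pick_spec v1.2, ← pick_spec v2.2]
      exact h1⟩ : {v // v ∈ vertexSet t} ↪ Fin n))
  · intro i hi
    exact Finset.mem_univ _
  · intro i1 h1 i2 h2 he
    have e1 : nu i1 = t := (Finset.mem_filter.1 h1).2
    have e2 : nu i2 = t := (Finset.mem_filter.1 h2).2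
    funext j
    have hv := mem_vertexSet t j
    have hfe := DFunLike.congr_fun he (⟨t j, hv⟩ : {v // v ∈ vertexSet t})
    have hp : t (pick t (t j) hv) = t j := pick_spec hv
    have q1 : i1 (pick t (t j) hv) = i1 j := by
      apply eq_of_nu_eq
      rw [e1]
      exact hp
    have q2 : i2 (pick t (t j) hv) = i2 j := by
      apply eq_of_nu_eq
      rw [e2]
      exact hp
    rw [← q1, ← q2]
    exact hfe
  · intro f _
    set i : Fin k → Fin n := fun j => f ⟨t j, mem_vertexSet t j⟩ with hidef
    have hker : ∀ a b : Fin k, i a = i b ↔ t a = t b := by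
      intro a b
      constructor
      · intro h
        have := f.injective h
        exact congrArg Subtype.val this
      · intro h
        exact congrArg f (Subtype.ext h)
    have hnu : nu i = t := by rw [nu_congr hker, nu_fixed ht]
    refine ⟨i, Finset.mem_filter.2 ⟨Finset.mem_univ _, hnu⟩, ?_⟩
    apply DFunLike.ext
    intro v
    show i (pick t v.1 v.2) = f v
    rw [hidef]
    show f ⟨t (pick t v.1 v.2), _⟩ = f v
    congr 1
    exact Subtype.ext (pick_spec v.2)

lemma norm_bound (ht : Normalized t) : ∀ (m : ℕ) (j : Fin k), j.1 < m → t j ≤ j.1 + 1 := by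
  intro m
  induction m with
  | zero => intro j h; omega
  | succ m ih =>
    intro j hj
    by_cases h1 : 1 < t j
    · obtain ⟨j', hlt, hj'⟩ := ht.2 j h1
      have hb := ih j' (by omega)
      have : j'.1 < j.1 := hlt
      omega
    · have := ht.1.1 j
      omega

instance : Finite {t : Fin k → ℕ // Normalized t} := by
  apply Finite.of_injective
    (fun t : {t : Fin k → ℕ // Normalized t} =>
      (fun j => (⟨t.1 j, by
        have := norm_bound t.2 (j.1 + 1) j (by omega)
        have := j.2
        omega⟩ : Fin (k + 1)) : Fin k → Fin (k + 1)))
  intro t1 t2 h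
  apply Subtype.ext
  funext j
  have := congrFun h j
  exact congrArg Fin.val this

theorem comb_main (p : ℝ) :
    ∑ i : Fin k → Fin n, (if ∀ j, i j ≠ i (cyclicSucc j)
        then p ^ (Finset.image (fun j : Fin k => s(i j, i (cyclicSucc j))) Finset.univ).card
        else (0:ℝ))
      = ∑' t : {t : Fin k → ℕ // Normalized t},
          p ^ (edgeSet t.1).card * (n.descFactorial (vertexSet t.1).card : ℝ) := by
  classical
  have : Fintype {t : Fin k → ℕ // Normalized t} := Fintype.ofFinite _
  rw [tsum_fintype, ← Finset.sum_filter]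
  set s := Finset.univ.filter (fun i : Fin k → Fin n => ∀ j, i j ≠ i (cyclicSucc j)) with hs
  set T : Finset (Fin k → ℕ) :=
    Finset.univ.image (Subtype.val : {t : Fin k → ℕ // Normalized t} → (Fin k → ℕ)) with hT
  have hmap : ∀ i ∈ s, nu i ∈ T := by
    intro i hi
    exact Finset.mem_image.2 ⟨⟨nu i, nu_normalized ((Finset.mem_filter.1 hi).2)⟩,
      Finset.mem_univ _, rfl⟩
  rw [← Finset.sum_fiberwise_of_maps_to hmap
    (fun i => p ^ (Finset.image (fun j : Fin k => s(i j, i (cyclicSucc j))) Finset.univ).card)]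
  rw [hT, Finset.sum_image (fun x _ y _ (h : Subtype.val x = Subtype.val y) => Subtype.ext h)]
  apply Finset.sum_congr rfl
  intro t0 _
  have ht : Normalized t0.1 := t0.2
  have hfib : s.filter (fun i => nu i = t0.1)
      = Finset.univ.filter (fun i : Fin k → Fin n => nu i = t0.1) := by
    rw [hs, Finset.filter_filter]
    apply Finset.filter_congr
    intro i _
    constructor
    · rintro ⟨_, h2⟩
      exact h2
    · intro h2
      refine ⟨?_, h2⟩
      intro j he
      have hnn := nu_eq_of_eq he
      rw [h2] at hnn
      exact ht.1.2 j hnn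
  have hcardE : ∀ i ∈ s.filter (fun i => nu i = t0.1),
      (Finset.image (fun j : Fin k => s(i j, i (cyclicSucc j))) Finset.univ).card
        = (edgeSet t0.1).card := by
    intro i hi
    have hnu : nu i = t0.1 := (Finset.mem_filter.1 hi).2
    have hval : ∀ a b : Fin k, i a = i b ↔ t0.1 a = t0.1 b := fun a b =>
      ⟨fun h => by rw [← hnu]; exact nu_eq_of_eq h,
       fun h => eq_of_nu_eq (by rw [hnu]; exact h)⟩
    apply card_image_eq_ker
    intro a b
    constructor
    · intro h
      rcases Sym2.eq_iff.1 h with ⟨h1, h2⟩ | ⟨h1, h2⟩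
      · exact Sym2.eq_iff.2 (Or.inl ⟨(hval _ _).1 h1, (hval _ _).1 h2⟩)
      · exact Sym2.eq_iff.2 (Or.inr ⟨(hval _ _).1 h1, (hval _ _).1 h2⟩)
    · intro h
      rcases Sym2.eq_iff.1 h with ⟨h1, h2⟩ | ⟨h1, h2⟩
      · exact Sym2.eq_iff.2 (Or.inl ⟨(hval _ _).2 h1, (hval _ _).2 h2⟩)
      · exact Sym2.eq_iff.2 (Or.inr ⟨(hval _ _).2 h1, (hval _ _).2 h2⟩)
  rw [Finset.sum_congr rfl (fun i hi => congrArg (fun c => p ^ c) (hcardE i hi)),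
    Finset.sum_const, hfib, fiber_card ht, nsmul_eq_mul]
  exact mul_comm _ _

end ERComb

end ERAux

/-- For `λ > 0` and `1 ≤ k ≤ n` (with `λ ≤ n`),
`E[Tr(M_{n,λ/n}^k)] = ∑_{ω normalized k-tuple} (λ/n)^{|E(ω)|} · n!/(n - |V(ω)|)!`,
where `n!/(n-j)! = n.descFactorial j` counts the injections of `{1,…,j}` into `{1,…,n}`. -/


theorem ER_expected_trace_power
    {Ω : Type*} [MeasurableSpace Ω] (P : Measure Ω) [IsProbabilityMeasure P]
    (lam : ℝ) (hlam : 0 < lam) (k n : ℕ) (hk : 0 < k) (hkn : k ≤ n) (hln : lam ≤ n)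
    (M : Ω → Matrix (Fin n) (Fin n) ℝ) (hM : IsERMatrix P n (lam / n) M) :
    ∫ ω, Matrix.trace (M ω ^ k) ∂P =
      ∑' t : {t : Fin k → ℕ // Normalized t},
        (lam / n) ^ (edgeSet t.1).card * (n.descFactorial (vertexSet t.1).card : ℝ) := by
  classical
  obtain ⟨k', rfl⟩ : ∃ k', k = k' + 1 := ⟨k - 1, by omega⟩
  have hn : 0 < n := lt_of_lt_of_le hk hkn
  have h0 : 0 ≤ lam / n := le_of_lt (div_pos hlam (by exact_mod_cast hn))
  have h1 : (fun ω => Matrix.trace (M ω ^ (k' + 1)))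
      = fun ω => ∑ i : Fin (k' + 1) → Fin n, ∏ j : Fin (k' + 1), M ω (i j) (i (cyclicSucc j)) :=
    funext fun ω => trace_pow_eq (M ω) k'
  have hint : ∀ i : Fin (k' + 1) → Fin n,
      Integrable (fun ω => ∏ j : Fin (k' + 1), M ω (i j) (i (cyclicSucc j))) P := by
    intro i
    have hmeas : Measurable (fun ω => ∏ j : Fin (k' + 1), M ω (i j) (i (cyclicSucc j))) :=
      Finset.measurable_prod Finset.univ fun j _ => hM.meas (i j) (i (cyclicSucc j))
    refine Integrable.mono' (integrable_const (1 : ℝ)) hmeas.aestronglyMeasurable ?_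
    filter_upwards [ER_ae01 hM] with ω hω
    have habs : ‖∏ j : Fin (k' + 1), M ω (i j) (i (cyclicSucc j))‖
        = ∏ j : Fin (k' + 1), |M ω (i j) (i (cyclicSucc j))| := by
      rw [Real.norm_eq_abs, Finset.abs_prod]
    rw [habs]
    apply Finset.prod_le_one
    · intro j _
      exact abs_nonneg _
    · intro j _
      rcases hω (i j) (i (cyclicSucc j)) with hv | hv
      · rw [hv]; simp
      · rw [Set.mem_singleton_iff] at hv
        rw [hv]; simp
  rw [h1, integral_finset_sum _ (fun i _ => hint i),
    Finset.sum_congr rfl (fun i (_ : i ∈ Finset.univ) => ER_walk_integral hM h0 i)]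
  exact ERComb.comb_main (lam / n)

end
end

section
/- For every z ∈ ℂ with Im z > 0, there is exactly one s ∈ ℂ with Im s > 0 satisfying s = −1/(z + s) (equivalently s² + z·s + 1 = 0), and this unique s equals the Stieltjes transform S_sc(z) = ∫_ℝ 1/(x − z) dρ_sc(x) of the standard semicircle distribution. -/
open MeasureTheory ProbabilityTheory Filter Matrix
open scoped ENNReal

noncomputable section

/-- The Stieltjes transform of the standard semicircle distribution. -/
def stieltjesSC (z : ℂ) : ℂ := ∫ x : ℝ, ((x : ℂ) - z)⁻¹ ∂ semicircle

open Complex intervalIntegral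
open scoped NNReal

lemma root_ne_zero {z s : ℂ} (h : s ^ 2 + z * s + 1 = 0) : s ≠ 0 := by
  intro h0; rw [h0] at h; simp at h

lemma inv_root {z s : ℂ} (h : s ^ 2 + z * s + 1 = 0) :
    (s⁻¹) ^ 2 + z * s⁻¹ + 1 = 0 := by
  have hs := root_ne_zero h
  field_simp
  linear_combination h

lemma root_im_ne {z s : ℂ} (hz : 0 < z.im) (h : s ^ 2 + z * s + 1 = 0) : s.im ≠ 0 := by
  intro h0
  have hs : s = (s.re : ℂ) := Complex.ext (by simp) (by simp [h0])
  rw [hs] at h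
  have him := congrArg Complex.im h
  simp only [Complex.add_im, Complex.mul_im, Complex.one_im, Complex.zero_im, sq,
    Complex.ofReal_re, Complex.ofReal_im, Complex.mul_re] at him
  have hre : s.re = 0 := by
    rcases mul_eq_zero.1 (by linarith : z.im * s.re = 0) with h' | h'
    · exact absurd h' (ne_of_gt hz)
    · exact h'
  rw [hre] at h
  simp at h

lemma exists_root (z : ℂ) (hz : 0 < z.im) :
    ∃ s : ℂ, s ^ 2 + z * s + 1 = 0 ∧ 0 < s.im := by
  obtain ⟨r, hr⟩ : ∃ r : ℂ, r ^ 2 = z ^ 2 - 4 := ⟨(z ^ 2 - 4) ^ (2⁻¹ : ℂ), by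
    rcases eq_or_ne (z ^ 2 - 4) 0 with h | h
    · simp [h]
    · have := Complex.cpow_nat_inv_pow (z ^ 2 - 4) (n := 2) (by norm_num)
      simpa [h] using this⟩
  have hroot : ((-z + r) / 2) ^ 2 + z * ((-z + r) / 2) + 1 = 0 := by
    field_simp
    linear_combination hr
  rcases (root_im_ne hz hroot).lt_or_gt with h | h
  · refine ⟨((-z + r) / 2)⁻¹, inv_root hroot, ?_⟩
    rw [Complex.inv_im]
    have hpos := Complex.normSq_pos.2 (root_ne_zero hroot)
    have : 0 < -((-z + r) / 2).im := by linarith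
    positivity
  · exact ⟨(-z + r) / 2, hroot, h⟩

lemma root_abs_lt_one {z s : ℂ} (hz : 0 < z.im) (h : s ^ 2 + z * s + 1 = 0)
    (him : 0 < s.im) : ‖s‖ < 1 := by
  have hs := root_ne_zero h
  have hzval : z = -(s + s⁻¹) := by
    field_simp
    linear_combination h
  have hzim : z.im = -s.im + s.im / Complex.normSq s := by
    rw [hzval]; simp [Complex.add_im, Complex.inv_im]; ring
  have hn : 0 < Complex.normSq s := Complex.normSq_pos.2 hs
  have h1 : Complex.normSq s < 1 := by
    by_contra hcon
    push_neg at hcon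
    have : s.im / Complex.normSq s ≤ s.im := by
      rw [div_le_iff₀ hn]
      nlinarith
    nlinarith [hz, hzim]
  have : ‖s‖ ^ 2 < 1 := by rw [← Complex.normSq_eq_norm_sq]; exact h1
  nlinarith [norm_nonneg s]

lemma root_unique {z s₁ s₂ : ℂ} (hz : 0 < z.im)
    (h₁ : s₁ ^ 2 + z * s₁ + 1 = 0) (h₂ : s₂ ^ 2 + z * s₂ + 1 = 0)
    (hi₁ : 0 < s₁.im) (hi₂ : 0 < s₂.im) : s₁ = s₂ := by
  by_contra hne
  have hfac : (s₁ - s₂) * (s₁ + s₂ + z) = 0 := by linear_combination h₁ - h₂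
  have hsum : s₁ + s₂ + z = 0 := by
    rcases mul_eq_zero.1 hfac with h | h
    · exact absurd (sub_eq_zero.1 h) hne
    · exact h
  have hs₁ := root_ne_zero h₁
  have h2inv : s₂ = s₁⁻¹ := by
    field_simp
    linear_combination -h₁ + s₁ * hsum
  have hlt : s₂.im < 0 := by
    rw [h2inv, Complex.inv_im, neg_div]
    have := Complex.normSq_pos.2 hs₁
    have : 0 < s₁.im / Complex.normSq s₁ := by positivity
    linarith
  linarith

noncomputable def Fc (s : ℂ) (w : ℂ) : ℂ :=
  I * Complex.exp (w * I) - I * Complex.exp (-(w * I)) + 2 * s * w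
    + I * (1 - s ^ 2) / s *
      (Complex.log (1 + s * Complex.exp (-(w * I))) - Complex.log (1 + s * Complex.exp (w * I)))

lemma abs_exp_I (θ : ℝ) : ‖Complex.exp ((θ:ℂ) * I)‖ = 1 :=
  Complex.norm_exp_ofReal_mul_I θ

lemma abs_exp_neg_I (θ : ℝ) : ‖Complex.exp (-((θ:ℂ) * I))‖ = 1 := by
  rw [Complex.exp_neg, norm_inv, abs_exp_I]; norm_num

lemma one_add_mem {s w : ℂ} (hs1 : ‖s‖ < 1) (hw : ‖w‖ = 1) :
    1 + s * w ∈ Complex.slitPlane ∧ 1 + s * w ≠ 0 := by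
  have habs : ‖s * w‖ < 1 := by rw [norm_mul, hw, mul_one]; exact hs1
  have hre : |(s * w).re| ≤ ‖s * w‖ := Complex.abs_re_le_norm _
  have hpos : 0 < (1 + s * w).re := by
    simp only [Complex.add_re, Complex.one_re]
    have := abs_le.1 hre
    linarith
  exact ⟨Complex.mem_slitPlane_iff.2 (Or.inl hpos), by
    intro h; rw [h] at hpos; simp at hpos⟩

lemma hasDerivAt_Fc (s : ℂ) (hs0 : s ≠ 0) (hs1 : ‖s‖ < 1) (θ : ℝ) :
    HasDerivAt (fun t : ℝ => Fc s t)
      (-(Complex.exp ((θ:ℂ) * I)) - Complex.exp (-((θ:ℂ) * I)) + 2 * s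
        + (1 - s ^ 2) * (Complex.exp (-((θ:ℂ) * I)) / (1 + s * Complex.exp (-((θ:ℂ) * I)))
          + Complex.exp ((θ:ℂ) * I) / (1 + s * Complex.exp ((θ:ℂ) * I)))) θ := by
  set w : ℂ := (θ : ℂ)
  have hA : HasDerivAt (fun w : ℂ => w * I) (1 * I) w := (hasDerivAt_id w).mul_const I
  have hE1 : HasDerivAt (fun w : ℂ => Complex.exp (w * I)) (Complex.exp (w * I) * (1 * I)) w :=
    hA.cexp
  have hE2 : HasDerivAt (fun w : ℂ => Complex.exp (-(w * I)))
      (Complex.exp (-(w * I)) * -(1 * I)) w := hA.neg.cexp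
  have hm1 := one_add_mem hs1 (abs_exp_neg_I θ)
  have hm2 := one_add_mem hs1 (abs_exp_I θ)
  have hL1 : HasDerivAt (fun w : ℂ => Complex.log (1 + s * Complex.exp (-(w * I))))
      ((s * (Complex.exp (-(w * I)) * -(1 * I))) / (1 + s * Complex.exp (-(w * I)))) w :=
    ((hE2.const_mul s).const_add 1).clog hm1.1
  have hL2 : HasDerivAt (fun w : ℂ => Complex.log (1 + s * Complex.exp (w * I)))
      ((s * (Complex.exp (w * I) * (1 * I))) / (1 + s * Complex.exp (w * I))) w :=
    ((hE1.const_mul s).const_add 1).clog hm2.1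
  have hlin : HasDerivAt (fun w : ℂ => 2 * s * w) (2 * s) w := by
    simpa using (hasDerivAt_id w).const_mul (2 * s)
  have hFc : HasDerivAt (Fc s)
      (I * (Complex.exp (w * I) * (1 * I)) - I * (Complex.exp (-(w * I)) * -(1 * I)) + 2 * s
        + I * (1 - s ^ 2) / s *
          ((s * (Complex.exp (-(w * I)) * -(1 * I))) / (1 + s * Complex.exp (-(w * I)))
            - (s * (Complex.exp (w * I) * (1 * I))) / (1 + s * Complex.exp (w * I)))) w := by
    exact (((hE1.const_mul I).sub (hE2.const_mul I)).add hlin).add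
      ((hL1.sub hL2).const_mul (I * (1 - s ^ 2) / s))
  have := hFc.comp_ofReal
  convert this using 1
  have hne1 := hm1.2
  have hne2 := hm2.2
  field_simp
  ring_nf
  simp only [Complex.I_sq]
  ring

lemma exp_I_add_s_ne {s : ℂ} (hs1 : ‖s‖ < 1) {w : ℂ} (hw : ‖w‖ = 1) :
    w + s ≠ 0 := by
  intro h
  have hw' : w = -s := add_eq_zero_iff_eq_neg.1 h
  rw [hw', norm_neg] at hw
  rw [hw] at hs1
  exact lt_irrefl 1 hs1

lemma exp_I_eq (θ : ℝ) :
    Complex.exp (-((θ:ℂ) * I)) = Complex.cos θ - Complex.sin θ * I := by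
  rw [← neg_mul, Complex.exp_mul_I, Complex.cos_neg, Complex.sin_neg]
  ring

lemma cos_eq_E (θ : ℝ) :
    ((Real.cos θ : ℝ) : ℂ) = (Complex.exp ((θ:ℂ) * I) + (Complex.exp ((θ:ℂ) * I))⁻¹) / 2 := by
  rw [Complex.ofReal_cos, ← Complex.exp_neg]
  rw [Complex.exp_mul_I, exp_I_eq]
  ring

lemma sin_eq_E (θ : ℝ) :
    ((Real.sin θ : ℝ) : ℂ) = (Complex.exp ((θ:ℂ) * I) - (Complex.exp ((θ:ℂ) * I))⁻¹) / (2 * I) := by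
  have h1 := Complex.exp_mul_I ((θ:ℂ))
  have h2 := exp_I_eq θ
  rw [Complex.ofReal_sin, ← Complex.exp_neg]
  field_simp [Complex.I_ne_zero]
  linear_combination h2 - h1

lemma key_den_ne {s : ℂ} (hs0 : s ≠ 0) (hs1 : ‖s‖ < 1) (θ : ℝ) :
    2 * ((Real.cos θ : ℝ) : ℂ) + s + s⁻¹ ≠ 0 := by
  set E : ℂ := Complex.exp ((θ:ℂ) * I) with hEdef
  have hE0 : E ≠ 0 := Complex.exp_ne_zero _
  have habs : ‖E‖ = 1 := abs_exp_I θ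
  have h1 : E + s ≠ 0 := exp_I_add_s_ne hs1 habs
  have h2 : E⁻¹ + s ≠ 0 := exp_I_add_s_ne hs1 (by rw [norm_inv, habs]; norm_num)
  have hfac : (E + s) * (E⁻¹ + s) = s * (2 * ((Real.cos θ : ℝ) : ℂ) + s + s⁻¹) := by
    rw [cos_eq_E θ, ← hEdef]
    field_simp
    ring
  intro h
  rw [h, mul_zero] at hfac
  exact (mul_ne_zero h1 h2) hfac

lemma key_integral (s : ℂ) (hs0 : s ≠ 0) (hs1 : ‖s‖ < 1) :
    ∫ θ in (0:ℝ)..Real.pi,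
      ((4 * Real.sin θ ^ 2 : ℝ) : ℂ) * (2 * ((Real.cos θ : ℝ) : ℂ) + s + s⁻¹)⁻¹
      = 2 * Real.pi * s := by
  have hcont : Continuous fun θ : ℝ =>
      ((4 * Real.sin θ ^ 2 : ℝ) : ℂ) * (2 * ((Real.cos θ : ℝ) : ℂ) + s + s⁻¹)⁻¹ := by
    apply Continuous.mul
    · fun_prop
    · exact Continuous.inv₀ (by fun_prop) (fun θ => key_den_ne hs0 hs1 θ)
  have hderiv : ∀ θ ∈ Set.uIcc (0:ℝ) Real.pi,
      HasDerivAt (fun t : ℝ => Fc s t)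
        (((4 * Real.sin θ ^ 2 : ℝ) : ℂ) * (2 * ((Real.cos θ : ℝ) : ℂ) + s + s⁻¹)⁻¹) θ := by
    intro θ _
    have h := hasDerivAt_Fc s hs0 hs1 θ
    convert h using 1
    have hE0 : Complex.exp ((θ:ℂ) * I) ≠ 0 := Complex.exp_ne_zero _
    have hne1 := (one_add_mem hs1 (abs_exp_neg_I θ)).2
    have hne2 := (one_add_mem hs1 (abs_exp_I θ)).2
    have hden := key_den_ne hs0 hs1 θ
    rw [Complex.exp_neg] at hne1 ⊢
    rw [show ((4 * Real.sin θ ^ 2 : ℝ) : ℂ) = 4 * ((Real.sin θ : ℝ) : ℂ) ^ 2 by push_cast; ring]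
    rw [sin_eq_E θ, cos_eq_E θ] at *
    have hEs : Complex.exp ((θ:ℂ) * I) + s ≠ 0 := exp_I_add_s_ne hs1 (abs_exp_I θ)
    rw [← div_eq_mul_inv, div_eq_iff hden]
    have hne2' : 1 + Complex.exp ((θ:ℂ) * I) * s ≠ 0 := by rwa [mul_comm] at hne2
    field_simp [Complex.I_ne_zero]
    ring_nf
    simp only [Complex.I_sq]
    ring
  rw [intervalIntegral.integral_eq_sub_of_hasDerivAt hderiv
    (hcont.intervalIntegrable _ _)]
  have hpi : Fc s (Real.pi : ℝ) = 2 * s * Real.pi := by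
    unfold Fc
    rw [Complex.exp_pi_mul_I, Complex.exp_neg, Complex.exp_pi_mul_I]
    norm_num
  have h0 : Fc s (0 : ℝ) = 0 := by
    unfold Fc
    norm_num
  rw [hpi, h0]
  ring

lemma stieltjes_interval (z : ℂ) :
    stieltjesSC z = ∫ x in (-2:ℝ)..2,
      (((2 * Real.pi)⁻¹ * Real.sqrt (4 - x ^ 2) : ℝ) : ℂ) * ((x : ℂ) - z)⁻¹ := by
  unfold stieltjesSC semicircle
  have hdens : (Set.indicator (Set.Icc (-2 : ℝ) 2)
      fun x => ENNReal.ofReal ((2 * Real.pi)⁻¹ * Real.sqrt (4 - x ^ 2)))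
      = fun x => ((Set.indicator (Set.Icc (-2 : ℝ) 2)
        (fun x => Real.toNNReal ((2 * Real.pi)⁻¹ * Real.sqrt (4 - x ^ 2))) x : ℝ≥0) : ℝ≥0∞) := by
    funext x
    by_cases h : x ∈ Set.Icc (-2 : ℝ) 2
    · simp [Set.indicator_of_mem h, ENNReal.ofReal]
    · simp [Set.indicator_of_notMem h]
  rw [hdens]
  have hmeas : Measurable (Set.indicator (Set.Icc (-2 : ℝ) 2)
      (fun x => Real.toNNReal ((2 * Real.pi)⁻¹ * Real.sqrt (4 - x ^ 2)))) := by
    apply Measurable.indicator _ measurableSet_Icc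
    apply Measurable.real_toNNReal
    fun_prop
  rw [integral_withDensity_eq_integral_smul hmeas]
  have hpt : ∀ x : ℝ, (Set.indicator (Set.Icc (-2 : ℝ) 2)
      (fun x => Real.toNNReal ((2 * Real.pi)⁻¹ * Real.sqrt (4 - x ^ 2))) x) • ((x : ℂ) - z)⁻¹
      = Set.indicator (Set.Icc (-2 : ℝ) 2)
        (fun x => (((2 * Real.pi)⁻¹ * Real.sqrt (4 - x ^ 2) : ℝ) : ℂ) * ((x : ℂ) - z)⁻¹) x := by
    intro x
    by_cases h : x ∈ Set.Icc (-2 : ℝ) 2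
    · rw [Set.indicator_of_mem h, Set.indicator_of_mem h]
      have hnn : 0 ≤ (2 * Real.pi)⁻¹ * Real.sqrt (4 - x ^ 2) := by positivity
      rw [NNReal.smul_def, Real.coe_toNNReal _ hnn, Complex.real_smul]
    · rw [Set.indicator_of_notMem h, Set.indicator_of_notMem h, zero_smul]
  simp_rw [hpt]
  rw [MeasureTheory.integral_indicator measurableSet_Icc, MeasureTheory.integral_Icc_eq_integral_Ioc,
    ← intervalIntegral.integral_of_le (by norm_num : (-2:ℝ) ≤ 2)]

lemma stieltjes_eq_root (z : ℂ) (hz : 0 < z.im) {s : ℂ}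
    (hroot : s ^ 2 + z * s + 1 = 0) (him : 0 < s.im) : stieltjesSC z = s := by
  have hs0 : s ≠ 0 := root_ne_zero hroot
  have hs1 : ‖s‖ < 1 := root_abs_lt_one hz hroot him
  have hzval : z = -(s + s⁻¹) := by
    field_simp
    linear_combination hroot
  set g : ℝ → ℂ :=
    fun x => (((2 * Real.pi)⁻¹ * Real.sqrt (4 - x ^ 2) : ℝ) : ℂ) * ((x : ℂ) - z)⁻¹ with hg
  have hxz : ∀ x : ℝ, (x : ℂ) - z ≠ 0 := by
    intro x h
    have := congrArg Complex.im h
    simp only [Complex.sub_im, Complex.ofReal_im, Complex.zero_im] at this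
    linarith
  have hgc : Continuous g := by
    apply Continuous.mul
    · exact Complex.continuous_ofReal.comp (by fun_prop)
    · exact Continuous.inv₀ (by fun_prop) (fun x => hxz x)
  have hderiv : ∀ θ ∈ Set.uIcc (0:ℝ) Real.pi,
      HasDerivAt (fun θ : ℝ => 2 * Real.cos θ) (-(2 * Real.sin θ)) θ := by
    intro θ _
    simpa [mul_comm] using (Real.hasDerivAt_cos θ).const_mul 2
  have hsub := intervalIntegral.integral_comp_smul_deriv hderiv (by fun_prop) hgc
  simp only [Real.cos_zero, Real.cos_pi, mul_one] at hsub
  have h2 : ∫ x in (-2:ℝ)..2, g x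
      = ∫ θ in (0:ℝ)..Real.pi, (2 * Real.sin θ) • g (2 * Real.cos θ) := by
    rw [show ((2:ℝ) * -1) = -2 from by norm_num] at hsub
    rw [intervalIntegral.integral_symm (a := (2:ℝ)) (b := (-2:ℝ)), ← hsub,
      ← intervalIntegral.integral_neg]
    congr 1
    funext θ
    simp [neg_smul]
  have hcongr : Set.EqOn (fun θ => (2 * Real.sin θ) • g (2 * Real.cos θ))
      (fun θ => (((2 * Real.pi)⁻¹ : ℝ) : ℂ) *
        (((4 * Real.sin θ ^ 2 : ℝ) : ℂ) * (2 * ((Real.cos θ : ℝ) : ℂ) + s + s⁻¹)⁻¹))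
      (Set.uIcc (0:ℝ) Real.pi) := by
    intro θ hθ
    rw [Set.uIcc_of_le Real.pi_pos.le] at hθ
    have hsin : 0 ≤ Real.sin θ := Real.sin_nonneg_of_nonneg_of_le_pi hθ.1 hθ.2
    have hsqrt : Real.sqrt (4 - (2 * Real.cos θ) ^ 2) = 2 * Real.sin θ := by
      rw [show (4 - (2 * Real.cos θ) ^ 2) = (2 * Real.sin θ) ^ 2 by
        nlinarith [Real.sin_sq_add_cos_sq θ], Real.sqrt_sq (by positivity)]
    have hdeneq : ((2 * Real.cos θ : ℝ) : ℂ) - z = 2 * ((Real.cos θ : ℝ) : ℂ) + s + s⁻¹ := by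
      rw [hzval]; push_cast; ring
    show (2 * Real.sin θ) • g (2 * Real.cos θ) = _
    rw [hg]
    simp only []
    rw [hsqrt, hdeneq, Complex.real_smul]
    push_cast
    ring
  rw [stieltjes_interval, h2, intervalIntegral.integral_congr hcongr,
    intervalIntegral.integral_const_mul, key_integral s hs0 hs1]
  have hpi : (Real.pi : ℂ) ≠ 0 := by exact_mod_cast Real.pi_ne_zero
  field_simp
  push_cast
  field_simp

/-- For `Im z > 0`, there is exactly one `s` with `Im s > 0` satisfying
`s = -1/(z + s)`, and it is the Stieltjes transform `S_sc(z)` of the semicircle law: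
`s` satisfies these conditions iff `s = S_sc(z)`. -/
theorem stieltjes_semicircle_unique (z : ℂ) (hz : 0 < z.im) :
    ∀ s : ℂ, (0 < s.im ∧ s = -(z + s)⁻¹) ↔ s = stieltjesSC z := by
  obtain ⟨s₀, hroot₀, him₀⟩ := exists_root z hz
  have hm : stieltjesSC z = s₀ := stieltjes_eq_root z hz hroot₀ him₀
  intro s
  constructor
  · rintro ⟨him, heq⟩
    have hzs : z + s ≠ 0 := by
      intro h
      rw [h] at heq
      simp only [_root_.inv_zero, neg_zero] at heq
      rw [heq] at him
      simp at him
    field_simp [hzs] at heq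
    have hroot : s ^ 2 + z * s + 1 = 0 := by linear_combination heq
    rw [hm]
    exact root_unique hz hroot hroot₀ him him₀
  · rintro rfl
    rw [hm]
    refine ⟨him₀, ?_⟩
    have hzs₀ : z + s₀ ≠ 0 := by
      intro h
      have hmul : s₀ * (z + s₀) = -1 := by linear_combination hroot₀
      rw [h, mul_zero] at hmul
      norm_num at hmul
    field_simp
    linear_combination hroot₀

end
end

section
/- Let a < b be reals, let ν and (μ_n)_{n≥1}, (μ'_n)_{n≥1} be Borel probability measures on ℝ, and let (ζ_n) be a sequence of positive reals with ζ_n → 0. Suppose μ_n converges weakly to ν as n → ∞ and that for all n, μ_n([a+ζ_n, b−ζ_n]) ≤ μ'_n([a,b]) ≤ μ_n([a−ζ_n, b+ζ_n]). Then limsup_{n→∞} |ν([a,b]) − μ'_n([a,b])| ≤ ν({a}) + ν({b}). -/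
open MeasureTheory ProbabilityTheory Filter Matrix
open scoped ENNReal

noncomputable section

/-- If `μ_n → ν` weakly and `μ_n([a+ζ_n, b-ζ_n]) ≤ μ'_n([a,b]) ≤
μ_n([a-ζ_n, b+ζ_n])` with `ζ_n → 0`, then
`limsup_n |ν([a,b]) - μ'_n([a,b])| ≤ ν({a}) + ν({b})`. -/
theorem limsup_interval_mass_le
    (a b : ℝ) (hab : a < b)
    (ν : Measure ℝ) [IsProbabilityMeasure ν]
    (μ μ' : ℕ → Measure ℝ)
    (hμ : ∀ n, IsProbabilityMeasure (μ n)) (hμ' : ∀ n, IsProbabilityMeasure (μ' n))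
    (ζ : ℕ → ℝ) (hζpos : ∀ n, 0 < ζ n) (hζ : Tendsto ζ atTop (nhds 0))
    (hw : WeakTendsto atTop μ ν)
    (hsand : ∀ n, μ n (Set.Icc (a + ζ n) (b - ζ n)) ≤ μ' n (Set.Icc a b) ∧
      μ' n (Set.Icc a b) ≤ μ n (Set.Icc (a - ζ n) (b + ζ n))) :
    Filter.limsup
        (fun n => |(ν (Set.Icc a b)).toReal - (μ' n (Set.Icc a b)).toReal|) atTop ≤
      (ν {a}).toReal + (ν {b}).toReal := by
  classical
  -- weak convergence in the space of probability measures
  let P : ℕ → ProbabilityMeasure ℝ := fun n => ⟨μ n, hμ n⟩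
  let Q : ProbabilityMeasure ℝ := ⟨ν, inferInstance⟩
  have hPQ : Tendsto P atTop (nhds Q) := by
    rw [ProbabilityMeasure.tendsto_iff_forall_integral_tendsto]
    intro f
    refine hw f f.continuous ⟨‖f‖, fun x => ?_⟩
    simpa [Real.norm_eq_abs] using f.norm_coe_le_norm x
  refine le_of_forall_pos_le_add (fun ε hε => ?_)
  -- shrinking sequence
  set u : ℕ → ℝ := fun k => 1 / (k + 1) with hu_def
  have hupos : ∀ k, 0 < u k := fun k => by positivity
  have hu : Tendsto u atTop (nhds 0) := tendsto_one_div_add_atTop_nhds_zero_nat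
  have huanti : Antitone u := by
    intro k m hkm
    have : (k : ℝ) + 1 ≤ (m : ℝ) + 1 := by exact_mod_cast by omega
    exact one_div_le_one_div_of_le (by positivity) this
  -- continuity from above for the closed thickenings
  have hiInter : (⋂ k, Set.Icc (a - u k) (b + u k)) = Set.Icc a b := by
    ext x
    simp only [Set.mem_iInter, Set.mem_Icc]
    constructor
    · intro h
      have ha : Tendsto (fun k => a - u k) atTop (nhds a) := by
        simpa using tendsto_const_nhds.sub hu
      have hb : Tendsto (fun k => b + u k) atTop (nhds b) := by
        simpa using tendsto_const_nhds.add hu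
      exact ⟨le_of_tendsto' ha (fun k => (h k).1), ge_of_tendsto' hb (fun k => (h k).2)⟩
    · intro h k
      exact ⟨by linarith [(hupos k).le, h.1], by linarith [(hupos k).le, h.2]⟩
  have hA : Tendsto (fun k => ν (Set.Icc (a - u k) (b + u k))) atTop
      (nhds (ν (Set.Icc a b))) := by
    have := tendsto_measure_iInter_atTop (μ := ν)
      (s := fun k => Set.Icc (a - u k) (b + u k))
      (fun k => measurableSet_Icc.nullMeasurableSet)
      (fun k m hkm => Set.Icc_subset_Icc (by linarith [huanti hkm]) (by linarith [huanti hkm]))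
      ⟨0, measure_ne_top ν _⟩
    rw [hiInter] at this
    exact this
  -- continuity from below for the open shrinkings
  have hiUnion : (⋃ k, Set.Ioo (a + u k) (b - u k)) = Set.Ioo a b := by
    ext x
    simp only [Set.mem_iUnion, Set.mem_Ioo]
    constructor
    · rintro ⟨k, h1, h2⟩
      exact ⟨by linarith [hupos k], by linarith [hupos k]⟩
    · rintro ⟨h1, h2⟩
      have : ∀ᶠ k in atTop, u k < min (x - a) (b - x) :=
        hu.eventually_lt_const (lt_min (by linarith) (by linarith))
      obtain ⟨k, hk⟩ := this.exists
      exact ⟨k, by linarith [lt_min_iff.mp hk], by linarith [lt_min_iff.mp hk]⟩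
  have hB : Tendsto (fun k => ν (Set.Ioo (a + u k) (b - u k))) atTop
      (nhds (ν (Set.Ioo a b))) := by
    have := tendsto_measure_iUnion_atTop (μ := ν)
      (s := fun k => Set.Ioo (a + u k) (b - u k))
      (fun k m hkm => Set.Ioo_subset_Ioo (by linarith [huanti hkm]) (by linarith [huanti hkm]))
    rw [hiUnion] at this
    exact this
  have hA' : Tendsto (fun k => (ν (Set.Icc (a - u k) (b + u k))).toReal) atTop
      (nhds (ν (Set.Icc a b)).toReal) := (ENNReal.tendsto_toReal (measure_ne_top ν _)).comp hA
  have hB' : Tendsto (fun k => (ν (Set.Ioo (a + u k) (b - u k))).toReal) atTop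
      (nhds (ν (Set.Ioo a b)).toReal) := (ENNReal.tendsto_toReal (measure_ne_top ν _)).comp hB
  have e1 : ∀ᶠ k in atTop,
      (ν (Set.Icc (a - u k) (b + u k))).toReal < (ν (Set.Icc a b)).toReal + ε / 2 :=
    hA'.eventually_lt_const (by linarith)
  have e2 : ∀ᶠ k in atTop,
      (ν (Set.Ioo a b)).toReal - ε / 2 < (ν (Set.Ioo (a + u k) (b - u k))).toReal :=
    hB'.eventually_const_lt (by linarith)
  obtain ⟨k, h1, h2⟩ := (e1.and e2).exists
  set δ := u k with hδ_def
  have hδpos : 0 < δ := hupos k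
  set F := Set.Icc (a - δ) (b + δ) with hF_def
  set U := Set.Ioo (a + δ) (b - δ) with hU_def
  -- portmanteau bounds
  have hFc : atTop.limsup (fun n => μ n F) ≤ ν F :=
    ProbabilityMeasure.limsup_measure_closed_le_of_tendsto hPQ isClosed_Icc
  have hUo : ν U ≤ atTop.liminf (fun n => μ n U) :=
    ProbabilityMeasure.le_liminf_measure_open_of_tendsto hPQ isOpen_Ioo
  have hεhalf : (0 : ℝ≥0∞) < ENNReal.ofReal (ε / 2) := ENNReal.ofReal_pos.mpr (by linarith)
  have eF : ∀ᶠ n in atTop, μ n F < ν F + ENNReal.ofReal (ε / 2) :=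
    eventually_lt_of_limsup_lt
      (lt_of_le_of_lt hFc (ENNReal.lt_add_right (measure_ne_top ν F) hεhalf.ne'))
  have eU : ∀ᶠ n in atTop, ν U ≤ μ n U + ENNReal.ofReal (ε / 2) := by
    by_cases hsmall : ν U ≤ ENNReal.ofReal (ε / 2)
    · exact Eventually.of_forall fun n => hsmall.trans le_add_self
    · push_neg at hsmall
      have hne0 : ν U ≠ 0 := (hεhalf.trans hsmall).ne'
      have : ν U - ENNReal.ofReal (ε / 2) < atTop.liminf (fun n => μ n U) :=
        lt_of_lt_of_le (ENNReal.sub_lt_self (measure_ne_top ν U) hne0 hεhalf.ne') hUo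
      filter_upwards [eventually_lt_of_lt_liminf this] with n hn
      exact ((ENNReal.sub_lt_iff_lt_right ENNReal.ofReal_ne_top hsmall.le).mp hn).le
  have eζ : ∀ᶠ n in atTop, ζ n < δ := hζ.eventually_lt_const hδpos
  -- splitting ν [a,b] into the open interval and the endpoints
  have hsplit : (ν (Set.Icc a b)).toReal ≤
      (ν (Set.Ioo a b)).toReal + (ν {a}).toReal + (ν {b}).toReal := by
    have hsub : Set.Icc a b ⊆ (Set.Ioo a b ∪ {a}) ∪ {b} := by
      intro x hx
      rcases eq_or_lt_of_le hx.1 with h | h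
      · exact Or.inl (Or.inr (by simp [← h]))
      rcases eq_or_lt_of_le hx.2 with h' | h'
      · exact Or.inr (by simp [h'])
      · exact Or.inl (Or.inl ⟨h, h'⟩)
    have hle : ν (Set.Icc a b) ≤ ν (Set.Ioo a b) + ν {a} + ν {b} :=
      (measure_mono hsub).trans ((measure_union_le _ _).trans
        (add_le_add_left (measure_union_le _ _) _))
    have := ENNReal.toReal_mono (by finiteness) hle
    rwa [ENNReal.toReal_add (by finiteness) (by finiteness),
      ENNReal.toReal_add (by finiteness) (by finiteness)] at this
  -- conclude
  refine limsup_le_of_le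
    (isCoboundedUnder_le_of_eventually_le atTop (x := 0)
      (Eventually.of_forall fun n => abs_nonneg _)) ?_
  filter_upwards [eF, eU, eζ] with n hFn hUn hζn
  have hupper : μ' n (Set.Icc a b) ≤ ν F + ENNReal.ofReal (ε / 2) := by
    refine le_trans ((hsand n).2.trans (measure_mono ?_)) hFn.le
    exact Set.Icc_subset_Icc (by linarith) (by linarith)
  have hlower : ν U ≤ μ' n (Set.Icc a b) + ENNReal.ofReal (ε / 2) := by
    refine hUn.trans (add_le_add_left ((measure_mono ?_).trans (hsand n).1) _)
    exact fun x hx => ⟨by linarith [hx.1], by linarith [hx.2]⟩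
  -- pass to real numbers
  have hupper' : (μ' n (Set.Icc a b)).toReal ≤ (ν F).toReal + ε / 2 := by
    have := ENNReal.toReal_mono (by finiteness) hupper
    rwa [ENNReal.toReal_add (by finiteness) (by finiteness),
      ENNReal.toReal_ofReal (by linarith)] at this
  have hlower' : (ν U).toReal ≤ (μ' n (Set.Icc a b)).toReal + ε / 2 := by
    have := ENNReal.toReal_mono (by finiteness) hlower
    rwa [ENNReal.toReal_add (by finiteness) (by finiteness),
      ENNReal.toReal_ofReal (by linarith)] at this
  have hpa : 0 ≤ (ν {a}).toReal := ENNReal.toReal_nonneg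
  have hpb : 0 ≤ (ν {b}).toReal := ENNReal.toReal_nonneg
  exact abs_le.mpr ⟨by linarith, by linarith⟩
end
end

section
/- Let Q ≥ 5 be an integer, set l := 4/Q, and define the partition points a_q := −2 + (q−1)l for q = 1, …, Q+1, so that [−2,2] is partitioned into Q intervals of equal length l. Then min_{1≤q≤Q} ρ_sc([a_q, a_{q+1}]) = ρ_sc([2−l, 2]) = (1/(2π))∫_{2−l}^{2} √(4−x²) dx ≥ l^{3/2}/(π√3). -/
open MeasureTheory ProbabilityTheory Filter Matrix
open scoped ENNReal

noncomputable section

lemma sc_cont : Continuous (fun x : ℝ => (2*Real.pi)⁻¹ * Real.sqrt (4 - x ^ 2)) := by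
  fun_prop

lemma sc_nonneg (x : ℝ) : 0 ≤ (2*Real.pi)⁻¹ * Real.sqrt (4 - x ^ 2) := by positivity

lemma semicircle_Icc_toReal {a b : ℝ} (ha : -2 ≤ a) (hb : b ≤ 2) (hab : a ≤ b) :
    (semicircle (Set.Icc a b)).toReal
      = ∫ x in a..b, (2*Real.pi)⁻¹ * Real.sqrt (4 - x ^ 2) := by
  have h1 : semicircle (Set.Icc a b)
      = ∫⁻ x in Set.Icc a b, ENNReal.ofReal ((2*Real.pi)⁻¹ * Real.sqrt (4 - x ^ 2)) := by
    rw [semicircle, withDensity_apply _ measurableSet_Icc]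
    refine setLIntegral_congr_fun measurableSet_Icc ?_
    intro x hx
    rw [Set.indicator_of_mem (Set.Icc_subset_Icc ha hb hx)]
  rw [h1, ← ofReal_integral_eq_lintegral_ofReal
      (sc_cont.integrableOn_Icc) (Filter.Eventually.of_forall fun x => sc_nonneg x),
    ENNReal.toReal_ofReal (integral_nonneg fun x => sc_nonneg x),
    intervalIntegral.integral_of_le hab, integral_Icc_eq_integral_Ioc]

lemma sqrt_int : ∀ l : ℝ, 0 ≤ l → ∫ x in (2-l)..2, Real.sqrt (2 - x) = 2/3 * l ^ ((3:ℝ)/2) := by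
  intro l hl
  have h := intervalIntegral.integral_comp_sub_left (a := 2-l) (b := 2) (fun x => Real.sqrt x) 2
  rw [h]
  norm_num
  rw [show (fun x : ℝ => Real.sqrt x) = fun x : ℝ => x ^ ((1:ℝ)/2) from funext fun x => Real.sqrt_eq_rpow x]
  rw [integral_rpow (Or.inl (by norm_num))]
  rw [Real.zero_rpow (by norm_num)]
  norm_num
  ring

lemma sqrt_lb {l : ℝ} (hl0 : 0 ≤ l) (hl : l ≤ 1) :
    l ^ ((3:ℝ)/2) / (Real.pi * Real.sqrt 3)
      ≤ ∫ x in (2-l)..2, (2*Real.pi)⁻¹ * Real.sqrt (4 - x ^ 2) := by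
  have hpi := Real.pi_pos
  have h3 : Real.sqrt 3 * Real.sqrt 3 = 3 := Real.mul_self_sqrt (by norm_num)
  have h3pos : 0 < Real.sqrt 3 := Real.sqrt_pos.2 (by norm_num)
  have key : ∫ x in (2-l)..2, (2*Real.pi)⁻¹ * (Real.sqrt 3 * Real.sqrt (2 - x))
      = l ^ ((3:ℝ)/2) / (Real.pi * Real.sqrt 3) := by
    rw [intervalIntegral.integral_const_mul, intervalIntegral.integral_const_mul,
      sqrt_int l hl0]
    field_simp
    linear_combination l ^ ((3:ℝ)/2) * h3
  rw [← key]
  apply intervalIntegral.integral_mono_on (by linarith)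
  · exact (by fun_prop : Continuous fun x : ℝ => (2*Real.pi)⁻¹ * (Real.sqrt 3 * Real.sqrt (2 - x))).intervalIntegrable _ _
  · exact sc_cont.intervalIntegrable _ _
  · intro x hx
    obtain ⟨hx1, hx2⟩ := hx
    have h2x : (0:ℝ) ≤ 2 - x := by linarith
    apply mul_le_mul_of_nonneg_left _ (by positivity)
    have : Real.sqrt 3 * Real.sqrt (2 - x) = Real.sqrt (3 * (2 - x)) := (Real.sqrt_mul (by norm_num) _).symm
    rw [this]
    apply Real.sqrt_le_sqrt
    nlinarith

lemma sym_eq (l : ℝ) :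
    ∫ x in (2-l)..2, (2*Real.pi)⁻¹ * Real.sqrt (4 - x ^ 2)
      = ∫ x in (-2)..(-2+l), (2*Real.pi)⁻¹ * Real.sqrt (4 - x ^ 2) := by
  have h := intervalIntegral.integral_comp_neg (a := 2-l) (b := 2)
    (fun x => (2*Real.pi)⁻¹ * Real.sqrt (4 - x ^ 2))
  simp only [neg_sq] at h
  rw [h]
  congr 1 <;> ring

lemma interior_ge {l a b : ℝ} (hl0 : 0 < l) (hl1 : l ≤ 1) (hba : b = a + l)
    (ha : -2 + l ≤ a) (hb : b ≤ 2 - l) :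
    ∫ x in (2-l)..2, (2*Real.pi)⁻¹ * Real.sqrt (4 - x ^ 2)
      ≤ ∫ x in a..b, (2*Real.pi)⁻¹ * Real.sqrt (4 - x ^ 2) := by
  have hab : a ≤ b := by linarith
  set c : ℝ := (2*Real.pi)⁻¹ * Real.sqrt (4 - (2-l) ^ 2) with hc_def
  have step1 : ∫ x in (2-l)..2, (2*Real.pi)⁻¹ * Real.sqrt (4 - x ^ 2)
      ≤ ∫ x in (2-l)..2, c := by
    apply intervalIntegral.integral_mono_on (by linarith)
    · exact sc_cont.intervalIntegrable _ _
    · exact intervalIntegrable_const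
    · intro x hx
      obtain ⟨hx1, hx2⟩ := hx
      apply mul_le_mul_of_nonneg_left _ (by positivity)
      apply Real.sqrt_le_sqrt
      nlinarith
  have step2 : ∫ x in a..b, c ≤ ∫ x in a..b, (2*Real.pi)⁻¹ * Real.sqrt (4 - x ^ 2) := by
    apply intervalIntegral.integral_mono_on hab
    · exact intervalIntegrable_const
    · exact sc_cont.intervalIntegrable _ _
    · intro x hx
      obtain ⟨hx1, hx2⟩ := hx
      apply mul_le_mul_of_nonneg_left _ (by positivity)
      apply Real.sqrt_le_sqrt
      nlinarith
  have hmid : (∫ x in (2-l)..2, c) = ∫ x in a..b, c := by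
    rw [intervalIntegral.integral_const, intervalIntegral.integral_const]
    congr 1
    rw [hba]; ring
  linarith [hmid ▸ step1]

/-- Partition `[-2,2]` into `Q ≥ 5` intervals `[a_q, a_{q+1}]` of equal
length `l = 4/Q`, where `a_q = -2 + (q-1)l`. The minimal semicircle mass among them is the
mass of the edge interval `[2-l, 2]`, which equals `(2π)⁻¹ ∫_{2-l}^2 √(4-x²) dx` and is at
least `l^{3/2}/(π√3)`. -/
theorem semicircle_edge_interval_bound (Q : ℕ) (hQ : 5 ≤ Q) :
    (∀ q : ℕ, 1 ≤ q → q ≤ Q →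
      (semicircle (Set.Icc (2 - 4 / (Q : ℝ)) 2)).toReal ≤
        (semicircle (Set.Icc (-2 + ((q : ℝ) - 1) * (4 / (Q : ℝ)))
          (-2 + (q : ℝ) * (4 / (Q : ℝ))))).toReal) ∧
    (semicircle (Set.Icc (2 - 4 / (Q : ℝ)) 2)).toReal =
      (2 * Real.pi)⁻¹ * ∫ x in (2 - 4 / (Q : ℝ))..2, Real.sqrt (4 - x ^ 2) ∧
    (4 / (Q : ℝ)) ^ ((3 : ℝ) / 2) / (Real.pi * Real.sqrt 3) ≤
      (semicircle (Set.Icc (2 - 4 / (Q : ℝ)) 2)).toReal := by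
  have hQ0 : (0:ℝ) < Q := by exact_mod_cast (by omega : 0 < Q)
  have hQ5 : (5:ℝ) ≤ Q := by exact_mod_cast hQ
  have hQne : (Q:ℝ) ≠ 0 := ne_of_gt hQ0
  have hl0 : (0:ℝ) < 4 / (Q:ℝ) := by positivity
  have hl1 : 4 / (Q:ℝ) ≤ 4/5 := by
    rw [div_le_div_iff₀ hQ0 (by norm_num)]
    linarith
  have hQl : (Q : ℝ) * (4 / (Q:ℝ)) = 4 := by field_simp
  have hedge : (semicircle (Set.Icc (2 - 4 / (Q:ℝ)) 2)).toReal
      = ∫ x in (2 - 4 / (Q:ℝ))..2, (2*Real.pi)⁻¹ * Real.sqrt (4 - x ^ 2) :=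
    semicircle_Icc_toReal (by linarith) le_rfl (by linarith)
  refine ⟨?_, ?_, ?_⟩
  · intro q hq1 hqQ
    have hq1' : (1:ℝ) ≤ q := by exact_mod_cast hq1
    have hqQ' : (q:ℝ) ≤ Q := by exact_mod_cast hqQ
    have hab : -2 + ((q:ℝ) - 1) * (4 / (Q:ℝ)) ≤ -2 + (q:ℝ) * (4 / (Q:ℝ)) := by nlinarith
    have ha2 : (-2:ℝ) ≤ -2 + ((q:ℝ) - 1) * (4 / (Q:ℝ)) := by nlinarith
    have hb2 : -2 + (q:ℝ) * (4 / (Q:ℝ)) ≤ 2 := by nlinarith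
    rw [hedge, semicircle_Icc_toReal ha2 hb2 hab]
    rcases eq_or_lt_of_le hq1 with hq1e | hq1lt
    · -- q = 1 : symmetry
      have hav : -2 + ((q:ℝ) - 1) * (4 / (Q:ℝ)) = -2 := by rw [← hq1e]; push_cast; ring
      have hbv : -2 + (q:ℝ) * (4 / (Q:ℝ)) = -2 + 4 / (Q:ℝ) := by rw [← hq1e]; push_cast; ring
      rw [hav, hbv, ← sym_eq]
    · rcases eq_or_lt_of_le hqQ with hqQe | hqQlt
      · -- q = Q : same interval
        subst hqQe
        have hav : -2 + ((q:ℝ) - 1) * (4 / (q:ℝ)) = 2 - 4 / (q:ℝ) := by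
          field_simp; ring
        have hbv : -2 + (q:ℝ) * (4 / (q:ℝ)) = 2 := by field_simp; norm_num
        rw [hav, hbv]
      · -- interior
        have hq2 : (2:ℝ) ≤ q := by exact_mod_cast hq1lt
        have hqQ1 : (q:ℝ) + 1 ≤ Q := by exact_mod_cast hqQlt
        apply interior_ge hl0 (by linarith) (by ring)
        · nlinarith
        · nlinarith
  · rw [hedge, intervalIntegral.integral_const_mul]
  · rw [hedge]
    exact sqrt_lb hl0.le (by linarith)

end
end

section
/- Let n ≥ 2 and let H be an n×n real symmetric matrix written in block form H = [[a, Xᵀ],[X, H̃]] with a ∈ ℝ, X ∈ ℝ^{n−1}, and H̃ an (n−1)×(n−1) real symmetric matrix. Let Λ be an eigenvalue of H with a unit eigenvector (x, v), where x ∈ ℝ and v ∈ ℝ^{n−1}, and assume Λ is not an eigenvalue of H̃. Let Λ_1(H̃) ≤ ⋯ ≤ Λ_{n−1}(H̃) be the eigenvalues of H̃ and {u_j(H̃)}_{j=1}^{n−1} any orthonormal basis of ℝ^{n−1} with H̃ u_j(H̃) = Λ_j(H̃) u_j(H̃). Then x² = 1 / (1 + ∑_{j=1}^{n−1} (Λ_j(H̃)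 − Λ)^{−2} ⟨u_j(H̃), X⟩²), where ⟨·,·⟩ is the Euclidean inner product. -/
open MeasureTheory ProbabilityTheory Filter Matrix
open scoped ENNReal

noncomputable section

/-- (Eq. (5.8) of Erdős–Schlein–Yau / Lemma 41 of Tao–Vu.)
Write the `(n+1) × (n+1)` real symmetric matrix `H` in block form with upper-left entry
`a = H 0 0`, first column `X = (H (k+1) 0)_k`, and minor `H̃ = H.submatrix Fin.succ Fin.succ`.
If `(x, v)` is a unit eigenvector of `H` with eigenvalue `Λ`, the eigenvalues `μ_1 ≤ ⋯ ≤ μ_n`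
of `H̃` avoid `Λ`, and `u_j` is an orthonormal eigenbasis of `H̃` with `H̃ u_j = μ_j u_j`, then
`x² = 1/(1 + ∑_j (μ_j - Λ)⁻² ⟨u_j, X⟩²)`. -/
theorem eigenvector_first_coordinate_formula
    (n : ℕ) (hn : 1 ≤ n) (H : Matrix (Fin (n + 1)) (Fin (n + 1)) ℝ)
    (hH : H.IsSymm)
    (Λ : ℝ) (w : Fin (n + 1) → ℝ)
    (hw : ∑ i, w i ^ 2 = 1)
    (heig : H.mulVec w = Λ • w)
    (μ : Fin n → ℝ) (hμ : Monotone μ)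
    (u : Fin n → (Fin n → ℝ))
    (hortho : ∀ i j : Fin n, ∑ k, u i k * u j k = if i = j then 1 else 0)
    (heigu : ∀ j : Fin n, (H.submatrix Fin.succ Fin.succ).mulVec (u j) = μ j • u j)
    (hΛ : ∀ j : Fin n, μ j ≠ Λ) :
    (w 0) ^ 2 =
      1 / (1 + ∑ j : Fin n,
        ((μ j - Λ) ^ 2)⁻¹ * (∑ k : Fin n, u j k * H (Fin.succ k) 0) ^ 2) := by
  set x := w 0 with hx
  set v : Fin n → ℝ := fun k => w k.succ with hv
  set X : Fin n → ℝ := fun k => H k.succ 0 with hXdef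
  set Ht := H.submatrix Fin.succ Fin.succ with hHt
  -- row equations for the minor
  have hrow : ∀ k : Fin n, Ht.mulVec v k + x * X k = Λ * v k := by
    intro k
    have h := congrFun heig k.succ
    simp only [Matrix.mulVec, dotProduct, Pi.smul_apply, smul_eq_mul,
      Fin.sum_univ_succ] at h
    simp only [Matrix.mulVec, dotProduct, hHt, Matrix.submatrix_apply]
    linarith [h]
  -- symmetry of the minor
  have hsym : ∀ i j : Fin n, Ht j i = Ht i j := by
    intro i j
    simpa [hHt] using hH.apply i.succ j.succ
  -- coefficients
  set c : Fin n → ℝ := fun j => ∑ k, u j k * v k with hc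
  set Y : Fin n → ℝ := fun j => ∑ k, u j k * X k with hY
  have hkey : ∀ j : Fin n, (μ j - Λ) * c j = -(x * Y j) := by
    intro j
    have h1 : μ j * c j = ∑ k, (Ht.mulVec (u j)) k * v k := by
      rw [heigu j]
      simp [hc, Finset.mul_sum, Pi.smul_apply, smul_eq_mul]
      ring_nf
    have h2 : ∑ k, (Ht.mulVec (u j)) k * v k = ∑ i, u j i * Ht.mulVec v i := by
      simp only [Matrix.mulVec, dotProduct, Finset.sum_mul, Finset.mul_sum]
      rw [Finset.sum_comm]
      apply Finset.sum_congr rfl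
      intro i _
      apply Finset.sum_congr rfl
      intro k _
      rw [hsym i k]; ring
    have h3 : ∑ i, u j i * Ht.mulVec v i = ∑ i, u j i * (Λ * v i - x * X i) := by
      apply Finset.sum_congr rfl
      intro i _
      have := hrow i
      have : Ht.mulVec v i = Λ * v i - x * X i := by linarith
      rw [this]
    have : μ j * c j = Λ * c j - x * Y j := by
      rw [h1, h2, h3, hc, hY, Finset.mul_sum, Finset.mul_sum, ← Finset.sum_sub_distrib]
      exact Finset.sum_congr rfl fun i _ => by ring
    linarith [this]
  -- Parseval
  have hcol : ∀ k l : Fin n, ∑ j, u j k * u j l = if k = l then 1 else 0 := by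
    have h1 : (Matrix.of u) * (Matrix.of u)ᵀ = 1 := by
      ext i j
      simpa [Matrix.mul_apply, Matrix.one_apply] using hortho i j
    have h2 : (Matrix.of u)ᵀ * (Matrix.of u) = 1 := mul_eq_one_comm.mp h1
    intro k l
    have := congrFun (congrFun h2 k) l
    simpa [Matrix.mul_apply, Matrix.one_apply] using this
  have hpars : ∑ j, c j ^ 2 = ∑ k, v k ^ 2 := by
    calc ∑ j, c j ^ 2 = ∑ j, ∑ k, ∑ l, (u j k * u j l) * (v k * v l) := by
          apply Finset.sum_congr rfl
          intro j _
          rw [sq, hc]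
          rw [Finset.sum_mul_sum]
          apply Finset.sum_congr rfl; intro k _
          apply Finset.sum_congr rfl; intro l _
          ring
      _ = ∑ k, ∑ l, (∑ j, u j k * u j l) * (v k * v l) := by
          rw [Finset.sum_comm]
          apply Finset.sum_congr rfl; intro k _
          rw [Finset.sum_comm]
          simp [Finset.sum_mul]
      _ = ∑ k, v k ^ 2 := by
          simp [hcol, Finset.sum_ite_eq, sq]
  -- norm split
  have hnorm : x ^ 2 + ∑ k, v k ^ 2 = 1 := by
    rw [← hw, Fin.sum_univ_succ]
  -- c j squared
  have hcsq : ∀ j, c j ^ 2 = x ^ 2 * (((μ j - Λ) ^ 2)⁻¹ * Y j ^ 2) := by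
    intro j
    have hne : μ j - Λ ≠ 0 := sub_ne_zero.mpr (hΛ j)
    have h := hkey j
    have : c j = -(x * Y j) / (μ j - Λ) := by
      field_simp at h ⊢
      linarith [h]
    rw [this]
    field_simp
  set S := ∑ j : Fin n, ((μ j - Λ) ^ 2)⁻¹ * (∑ k : Fin n, u j k * H (Fin.succ k) 0) ^ 2 with hS
  have hSY : S = ∑ j, ((μ j - Λ) ^ 2)⁻¹ * Y j ^ 2 := rfl
  have hcS : ∑ j, c j ^ 2 = x ^ 2 * S := by
    rw [hSY, Finset.mul_sum]
    exact Finset.sum_congr rfl fun j _ => hcsq j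
  have hmain : x ^ 2 * (1 + S) = 1 := by
    have hexp : x ^ 2 * (1 + S) = x ^ 2 + x ^ 2 * S := by ring
    rw [hexp]
    linarith [hcS, hpars, hnorm]
  have hSnn : 0 ≤ S := by
    apply Finset.sum_nonneg
    intro j _
    positivity
  have h1S : 1 + S ≠ 0 := by positivity
  field_simp
  linarith [hmain]

end
end
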